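/- arXiv:1307.3719 — 6 statements merged into one kernel-verified Lean document; each statement's English description precedes it below -/
import Mathlib

section
/- Let P₀ and P₁ be π-reversible Markov kernels on (X, 𝒳). If P₁ dominates P₀ on the off-diagonal (i.e., for all A ∈ 𝒳 and π-a.s. all x, P₁(x, A \ {x}) ≥ P₀(x, A \ {x})), then P₁ dominates P₀ in the covariance ordering: for all f ∈ L²(π), ⟨f, P₁f⟩ ≤ ⟨f, P₀f⟩. -/
open MeasureTheory ProbabilityTheory

section Aux

variable {X : Type*} [MeasurableSpace X]

lemma peskun_ray_dom_Iio (μ ν : Measure X) {g : X → ℝ} (hg : Measurable g)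
    (h : ∀ q : ℚ, μ (g ⁻¹' Set.Iio (q : ℝ)) ≤ ν (g ⁻¹' Set.Iio (q : ℝ))) (a : ℝ) :
    μ (g ⁻¹' Set.Iio a) ≤ ν (g ⁻¹' Set.Iio a) := by
  have hne : Nonempty {q : ℚ // (q : ℝ) < a} := by
    obtain ⟨q, hq⟩ := exists_rat_lt a
    exact ⟨⟨q, hq⟩⟩
  have hU : g ⁻¹' Set.Iio a = ⋃ q : {q : ℚ // (q : ℝ) < a}, g ⁻¹' Set.Iio ((q : ℚ) : ℝ) := by
    ext y
    simp only [Set.mem_preimage, Set.mem_Iio, Set.mem_iUnion]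
    constructor
    · intro hy
      obtain ⟨q, hq1, hq2⟩ := exists_rat_btwn hy
      exact ⟨⟨q, hq2⟩, hq1⟩
    · rintro ⟨⟨q, hq⟩, hy⟩
      exact hy.trans hq
  have hdir : Directed (· ⊆ ·)
      fun q : {q : ℚ // (q : ℝ) < a} => g ⁻¹' Set.Iio ((q : ℚ) : ℝ) := by
    rintro ⟨q, hq⟩ ⟨r, hr⟩
    refine ⟨⟨max q r, by push_cast; exact max_lt hq hr⟩, ?_, ?_⟩
    · exact Set.preimage_mono (Set.Iio_subset_Iio (by push_cast; exact le_max_left _ _))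
    · exact Set.preimage_mono (Set.Iio_subset_Iio (by push_cast; exact le_max_right _ _))
  rw [hU, hdir.measure_iUnion, hdir.measure_iUnion]
  exact iSup_mono fun q => h q

lemma peskun_ray_dom_Ioi (μ ν : Measure X) {g : X → ℝ} (hg : Measurable g)
    (h : ∀ q : ℚ, μ (g ⁻¹' Set.Ioi (q : ℝ)) ≤ ν (g ⁻¹' Set.Ioi (q : ℝ))) (a : ℝ) :
    μ (g ⁻¹' Set.Ioi a) ≤ ν (g ⁻¹' Set.Ioi a) := by
  have hne : Nonempty {q : ℚ // a < (q : ℝ)} := by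
    obtain ⟨q, hq⟩ := exists_rat_gt a
    exact ⟨⟨q, hq⟩⟩
  have hU : g ⁻¹' Set.Ioi a = ⋃ q : {q : ℚ // a < (q : ℝ)}, g ⁻¹' Set.Ioi ((q : ℚ) : ℝ) := by
    ext y
    simp only [Set.mem_preimage, Set.mem_Ioi, Set.mem_iUnion]
    constructor
    · intro hy
      obtain ⟨q, hq1, hq2⟩ := exists_rat_btwn hy
      exact ⟨⟨q, hq1⟩, hq2⟩
    · rintro ⟨⟨q, hq⟩, hy⟩
      exact hq.trans hy
  have hdir : Directed (· ⊆ ·)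
      fun q : {q : ℚ // a < (q : ℝ)} => g ⁻¹' Set.Ioi ((q : ℚ) : ℝ) := by
    rintro ⟨q, hq⟩ ⟨r, hr⟩
    refine ⟨⟨min q r, by push_cast; exact lt_min hq hr⟩, ?_, ?_⟩
    · exact Set.preimage_mono (Set.Ioi_subset_Ioi (by push_cast; exact min_le_left _ _))
    · exact Set.preimage_mono (Set.Ioi_subset_Ioi (by push_cast; exact min_le_right _ _))
  rw [hU, hdir.measure_iUnion, hdir.measure_iUnion]
  exact iSup_mono fun q => h q

/-- If two measures are dominated on all rational rays pulled back by `g`, then the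
lintegrals of `(c - g y)²` are ordered. -/
lemma peskun_lint_dom (μ ν : Measure X) {g : X → ℝ} (hg : Measurable g)
    (h1 : ∀ q : ℚ, μ (g ⁻¹' Set.Iio (q : ℝ)) ≤ ν (g ⁻¹' Set.Iio (q : ℝ)))
    (h2 : ∀ q : ℚ, μ (g ⁻¹' Set.Ioi (q : ℝ)) ≤ ν (g ⁻¹' Set.Ioi (q : ℝ))) (c : ℝ) :
    ∫⁻ y, ENNReal.ofReal ((c - g y) ^ 2) ∂μ ≤ ∫⁻ y, ENNReal.ofReal ((c - g y) ^ 2) ∂ν := by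
  have hm : Measurable fun y => (c - g y) ^ 2 := (measurable_const.sub hg).pow_const 2
  rw [lintegral_eq_lintegral_meas_lt μ (Filter.Eventually.of_forall fun y => sq_nonneg _)
      hm.aemeasurable,
    lintegral_eq_lintegral_meas_lt ν (Filter.Eventually.of_forall fun y => sq_nonneg _)
      hm.aemeasurable]
  refine lintegral_mono_ae ((ae_restrict_iff' measurableSet_Ioi).2
    (Filter.Eventually.of_forall fun t ht => ?_))
  have hst : 0 < Real.sqrt t := Real.sqrt_pos.2 ht
  have hset : {y | t < (c - g y) ^ 2}
      = g ⁻¹' Set.Iio (c - Real.sqrt t) ∪ g ⁻¹' Set.Ioi (c + Real.sqrt t) := by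
    ext y
    simp only [Set.mem_setOf_eq, Set.mem_union, Set.mem_preimage, Set.mem_Iio, Set.mem_Ioi]
    have habs : t < (c - g y) ^ 2 ↔ Real.sqrt t < |c - g y| := by
      rw [← Real.sqrt_sq_eq_abs, Real.sqrt_lt_sqrt_iff (le_of_lt ht)]
    rw [habs, lt_abs]
    constructor
    · rintro (h | h)
      · left; linarith
      · right; linarith
    · rintro (h | h)
      · left; linarith
      · right; linarith
  have hd : Disjoint (g ⁻¹' Set.Iio (c - Real.sqrt t)) (g ⁻¹' Set.Ioi (c + Real.sqrt t)) :=
    Disjoint.preimage g ((Set.Iic_disjoint_Ioi (by linarith)).mono_left Set.Iio_subset_Iic_self)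
  rw [hset, measure_union hd (hg measurableSet_Ioi), measure_union hd (hg measurableSet_Ioi)]
  exact add_le_add (peskun_ray_dom_Iio μ ν hg h1 _) (peskun_ray_dom_Ioi μ ν hg h2 _)

/-- Stationarity from reversibility: the second marginal of `π ⊗ₘ P` is `π`. -/
lemma peskun_stat (π : Measure X) [IsProbabilityMeasure π] (P : Kernel X X) [IsMarkovKernel P]
    (hrev : (π.compProd P).map Prod.swap = π.compProd P) :
    (π.compProd P).map Prod.snd = π := by
  conv_lhs => rw [← hrev]
  rw [Measure.map_map measurable_snd measurable_swap]
  have h : (Prod.snd ∘ Prod.swap : X × X → X) = Prod.fst := rfl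
  rw [h]
  exact Measure.fst_compProd π P

lemma peskun_ae_kernel_null (π : Measure X) [IsProbabilityMeasure π] (P : Kernel X X)
    [IsMarkovKernel P] (hst : (π.compProd P).map Prod.snd = π)
    {N : Set X} (hN : MeasurableSet N) (hN0 : π N = 0) :
    ∀ᵐ x ∂π, P x N = 0 := by
  have h1 : ∫⁻ x, P x N ∂π = 0 := by
    have h2 := Measure.compProd_apply (μ := π) (κ := P) (measurable_snd hN)
    have h3 : (π.compProd P).map Prod.snd N = (π.compProd P) (Prod.snd ⁻¹' N) :=
      Measure.map_apply measurable_snd hN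
    have h4 : ∀ a : X, Prod.mk a ⁻¹' (Prod.snd ⁻¹' N) = N := fun a => rfl
    simp only [h4] at h2
    rw [← h2, ← h3, hst, hN0]
  have := (lintegral_eq_zero_iff (P.measurable_coe hN)).mp h1
  filter_upwards [this] with x hx using hx

/-- The key identity: the covariance term equals `∫ g² - (Dirichlet energy)/2`. -/
lemma peskun_key_eq (π : Measure X) [IsProbabilityMeasure π] (P : Kernel X X) [IsMarkovKernel P]
    (hst : (π.compProd P).map Prod.snd = π)
    {g : X → ℝ} (hgm : Measurable g) (hg2 : MemLp g 2 π) :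
    (∫ x, g x * ∫ y, g y ∂(P x) ∂π
      = ∫ x, g x ^ 2 ∂π
        - (∫⁻ p, ENNReal.ofReal ((g p.1 - g p.2) ^ 2) ∂(π.compProd P)).toReal / 2)
    ∧ ∫⁻ p, ENNReal.ofReal ((g p.1 - g p.2) ^ 2) ∂(π.compProd P) ≠ ⊤ := by
  set m := π.compProd P with hm
  have hfstmap : m.map Prod.fst = π := Measure.fst_compProd π P
  have hsq : Integrable (fun x => g x ^ 2) π := hg2.integrable_sq
  have hm1 : Measurable fun p : X × X => g p.1 := hgm.comp measurable_fst
  have hm2 : Measurable fun p : X × X => g p.2 := hgm.comp measurable_snd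
  have A1 : Integrable (fun p : X × X => g p.1 ^ 2) m := by
    have h := (integrable_map_measure (μ := m) (f := Prod.fst) (g := fun x => g x ^ 2)
      (by rw [hfstmap]; exact hsq.aestronglyMeasurable) measurable_fst.aemeasurable).mp
      (by rw [hfstmap]; exact hsq)
    exact h
  have A2 : Integrable (fun p : X × X => g p.2 ^ 2) m := by
    have h := (integrable_map_measure (μ := m) (f := Prod.snd) (g := fun x => g x ^ 2)
      (by rw [hst]; exact hsq.aestronglyMeasurable) measurable_snd.aemeasurable).mp
      (by rw [hst]; exact hsq)
    exact h
  have hi12 : Integrable (fun p : X × X => g p.1 ^ 2 + g p.2 ^ 2) m := A1.add A2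
  have A3 : Integrable (fun p : X × X => g p.1 * g p.2) m := by
    refine hi12.mono' (hm1.mul hm2).aestronglyMeasurable
      (Filter.Eventually.of_forall fun p => ?_)
    show ‖g p.1 * g p.2‖ ≤ g p.1 ^ 2 + g p.2 ^ 2
    rw [Real.norm_eq_abs, abs_mul]
    nlinarith [sq_nonneg (|g p.1| - |g p.2|), sq_abs (g p.1), sq_abs (g p.2),
      abs_nonneg (g p.1), abs_nonneg (g p.2)]
  have A4 : Integrable (fun p : X × X => (g p.1 - g p.2) ^ 2) m := by
    have h : (fun p : X × X => (g p.1 - g p.2) ^ 2)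
        = fun p => g p.1 ^ 2 + g p.2 ^ 2 - 2 * (g p.1 * g p.2) := by
      funext p; ring
    rw [h]
    exact (A1.add A2).sub (A3.const_mul 2)
  have E1 : ∫ p, g p.1 ^ 2 ∂m = ∫ x, g x ^ 2 ∂π := by
    rw [← hfstmap, integral_map measurable_fst.aemeasurable
      (hgm.pow_const 2).aestronglyMeasurable]
  have E2 : ∫ p, g p.2 ^ 2 ∂m = ∫ x, g x ^ 2 ∂π := by
    conv_rhs => rw [← hst]
    rw [integral_map measurable_snd.aemeasurable (hgm.pow_const 2).aestronglyMeasurable]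
  have E3 : ∫ p, g p.1 * g p.2 ∂m = ∫ x, g x * ∫ y, g y ∂(P x) ∂π := by
    rw [hm, Measure.integral_compProd A3]
    refine integral_congr_ae (Filter.Eventually.of_forall fun x => ?_)
    show ∫ y, g x * g y ∂(P x) = g x * ∫ y, g y ∂(P x)
    exact integral_const_mul _ _
  have E4 : ∫ p, (g p.1 - g p.2) ^ 2 ∂m
      = (∫⁻ p, ENNReal.ofReal ((g p.1 - g p.2) ^ 2) ∂m).toReal := by
    rw [integral_eq_lintegral_of_nonneg_ae (f := fun p : X × X => (g p.1 - g p.2) ^ 2)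
      (Filter.Eventually.of_forall fun p => sq_nonneg _)
      ((hm1.sub hm2).pow_const 2).aestronglyMeasurable]
  have E5 : ∫ p, (g p.1 - g p.2) ^ 2 ∂m
      = ∫ x, g x ^ 2 ∂π + ∫ x, g x ^ 2 ∂π - 2 * ∫ x, g x * ∫ y, g y ∂(P x) ∂π := by
    have h : (fun p : X × X => (g p.1 - g p.2) ^ 2)
        = fun p => g p.1 ^ 2 + g p.2 ^ 2 - 2 * (g p.1 * g p.2) := by
      funext p; ring
    rw [h, integral_sub hi12 (A3.const_mul 2), integral_add A1 A2,
      integral_const_mul, E1, E2, E3]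
  constructor
  · have := E4.symm.trans E5
    linarith
  · exact A4.lintegral_lt_top.ne

end Aux

/-- Off-diagonal (Peskun) domination implies covariance-ordering domination:
if `P₁(x, A \ {x}) ≥ P₀(x, A \ {x})` for all measurable `A` and `π`-a.e. `x`, then
`⟨f, P₁ f⟩ ≤ ⟨f, P₀ f⟩` for every `f ∈ L²(π)`. -/
theorem stmt3 {X : Type*} [MeasurableSpace X] [MeasurableSingletonClass X]
    (π : Measure X) [IsProbabilityMeasure π]
    (P0 P1 : Kernel X X) [IsMarkovKernel P0] [IsMarkovKernel P1]
    (hrev0 : (π.compProd P0).map Prod.swap = π.compProd P0)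
    (hrev1 : (π.compProd P1).map Prod.swap = π.compProd P1)
    (hpeskun : ∀ A : Set X, MeasurableSet A →
      ∀ᵐ x ∂π, P0 x (A \ {x}) ≤ P1 x (A \ {x}))
    (f : X → ℝ) (hf : MemLp f 2 π) :
    ∫ x, f x * (∫ y, f y ∂(P1 x)) ∂π ≤ ∫ x, f x * (∫ y, f y ∂(P0 x)) ∂π := by
  set g : X → ℝ := hf.aestronglyMeasurable.mk f with hgdef
  have hgm : Measurable g := hf.aestronglyMeasurable.stronglyMeasurable_mk.measurable
  have hfg : f =ᵐ[π] g := hf.aestronglyMeasurable.ae_eq_mk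
  have hg2 : MemLp g 2 π := hf.ae_eq hfg
  have hst0 : (π.compProd P0).map Prod.snd = π := peskun_stat π P0 hrev0
  have hst1 : (π.compProd P1).map Prod.snd = π := peskun_stat π P1 hrev1
  -- replace f by the measurable representative g
  have hrepl : ∀ (P : Kernel X X), IsMarkovKernel P → (π.compProd P).map Prod.snd = π →
      ∫ x, f x * ∫ y, f y ∂(P x) ∂π = ∫ x, g x * ∫ y, g y ∂(P x) ∂π := by
    intro P hMP hst
    set N := toMeasurable π {x | f x ≠ g x} with hNdef
    have hNm : MeasurableSet N := measurableSet_toMeasurable π _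
    have hN0 : π N = 0 := by
      rw [hNdef, measure_toMeasurable]
      exact ae_iff.mp hfg
    have hker := peskun_ae_kernel_null π P hst hNm hN0
    refine integral_congr_ae ?_
    filter_upwards [hfg, hker] with x hx hPx
    have hinner : ∫ y, f y ∂(P x) = ∫ y, g y ∂(P x) := by
      refine integral_congr_ae (ae_iff.mpr ?_)
      exact measure_mono_null (subset_toMeasurable π _) hPx
    rw [hx, hinner]
  rw [hrepl P0 inferInstance hst0, hrepl P1 inferInstance hst1]
  obtain ⟨hJ0, hfin0⟩ := peskun_key_eq π P0 hst0 hgm hg2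
  obtain ⟨hJ1, hfin1⟩ := peskun_key_eq π P1 hst1 hgm hg2
  rw [hJ0, hJ1]
  have hm1 : Measurable fun p : X × X => g p.1 := hgm.comp measurable_fst
  have hm2 : Measurable fun p : X × X => g p.2 := hgm.comp measurable_snd
  have hmeasE : Measurable fun p : X × X => ENNReal.ofReal ((g p.1 - g p.2) ^ 2) :=
    ENNReal.measurable_ofReal.comp ((hm1.sub hm2).pow_const 2)
  -- the key lintegral inequality
  have hL : ∫⁻ p, ENNReal.ofReal ((g p.1 - g p.2) ^ 2) ∂(π.compProd P0)
      ≤ ∫⁻ p, ENNReal.ofReal ((g p.1 - g p.2) ^ 2) ∂(π.compProd P1) := by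
    rw [Measure.lintegral_compProd hmeasE, Measure.lintegral_compProd hmeasE]
    have hq1 : ∀ᵐ x ∂π, ∀ q : ℚ,
        P0 x ((g ⁻¹' Set.Iio (q : ℝ)) \ {x}) ≤ P1 x ((g ⁻¹' Set.Iio (q : ℝ)) \ {x}) :=
      ae_all_iff.2 fun q => hpeskun _ (hgm measurableSet_Iio)
    have hq2 : ∀ᵐ x ∂π, ∀ q : ℚ,
        P0 x ((g ⁻¹' Set.Ioi (q : ℝ)) \ {x}) ≤ P1 x ((g ⁻¹' Set.Ioi (q : ℝ)) \ {x}) :=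
      ae_all_iff.2 fun q => hpeskun _ (hgm measurableSet_Ioi)
    refine lintegral_mono_ae ?_
    filter_upwards [hq1, hq2] with x h1 h2
    have hsplit : ∀ (P : Kernel X X), IsMarkovKernel P →
        ∫⁻ y, ENNReal.ofReal ((g x - g y) ^ 2) ∂(P x)
          = ∫⁻ y, ENNReal.ofReal ((g x - g y) ^ 2) ∂((P x).restrict {x}ᶜ) := by
      intro P hMP
      conv_lhs => rw [← Measure.restrict_add_restrict_compl
        (μ := P x) (measurableSet_singleton x)]
      rw [lintegral_add_measure]
      have h0 : ∫⁻ y, ENNReal.ofReal ((g x - g y) ^ 2) ∂((P x).restrict {x}) = 0 := by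
        rw [lintegral_singleton]
        simp
      rw [h0, zero_add]
    rw [hsplit P0 inferInstance, hsplit P1 inferInstance]
    refine peskun_lint_dom _ _ hgm ?_ ?_ (g x)
    · intro q
      rw [Measure.restrict_apply (hgm measurableSet_Iio),
        Measure.restrict_apply (hgm measurableSet_Iio)]
      simpa [Set.diff_eq] using h1 q
    · intro q
      rw [Measure.restrict_apply (hgm measurableSet_Ioi),
        Measure.restrict_apply (hgm measurableSet_Ioi)]
      simpa [Set.diff_eq] using h2 q
  have := ENNReal.toReal_mono hfin1 hL
  linarith
end

section
/- Let P and Q be Markov kernels on (X, 𝒳) with πP = πQ = π, and let (Xₖ)ₖ≥₀ be the inhomogeneous Markov chain with X₀ ∼ π that evolves alternatingly: transitions at even times use P and at odd times use Q. For f ∈ L²(π), if Σₖ≥₁ (|Cov(f(X₀), f(Xₖ))| + |Cov(f(X₁), f(Xₖ₊₁))|) < ∞, then the limit limₙ (1/n) Var(Σₖ₌₀ⁿ⁻¹ f(Xₖ)) exists and equals π f² − (π f)² + Σₖ≥₁ Cov(f(X₀), f(Xₖ)) + Σₖ≥₁ Cov(f(X₁), f(Xₖ₊₁)). -/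
open MeasureTheory ProbabilityTheory Filter
open scoped Topology

/-- `opSeq P Q i m f x = E[f(X_{i+m}) ∣ X_i = x]` for the inhomogeneous chain that uses the
kernel `P` for transitions out of even times and `Q` out of odd times. -/
noncomputable def opSeq {X : Type*} [MeasurableSpace X] (P Q : Kernel X X) :
    ℕ → ℕ → (X → ℝ) → X → ℝ
  | _, 0, f => f
  | i, m + 1, f => fun x => ∫ y, opSeq P Q (i + 1) m f y ∂((if Even i then P else Q) x)

/-- `covA π P Q f i m = Cov(f(X_i), f(X_{i+m}))` for the alternating chain started in
stationarity `X₀ ∼ π` (so that every `X_k ∼ π`). -/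
noncomputable def covA {X : Type*} [MeasurableSpace X] (π : Measure X) (P Q : Kernel X X)
    (f : X → ℝ) (i m : ℕ) : ℝ :=
  (∫ x, f x * opSeq P Q i m f x ∂π) - (∫ x, f x ∂π) ^ 2

/-- `varA π P Q f n = Var(∑_{k=0}^{n-1} f(X_k)) = ∑_{i,j<n} Cov(f(X_i), f(X_j))` for the
alternating chain started in stationarity. -/
noncomputable def varA {X : Type*} [MeasurableSpace X] (π : Measure X) (P Q : Kernel X X)
    (f : X → ℝ) (n : ℕ) : ℝ :=
  ∑ i ∈ Finset.range n, ∑ j ∈ Finset.range n,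
    covA π P Q f (min i j) (max i j - min i j)

section auxLemmas

variable {X : Type*} [MeasurableSpace X] (π : Measure X) (P Q : Kernel X X) (f : X → ℝ)

lemma opSeq_two_add (m : ℕ) : ∀ i, opSeq P Q (i + 2) m f = opSeq P Q i m f := by
  induction m with
  | zero => intro i; rfl
  | succ m ih =>
    intro i
    funext x
    show (∫ y, opSeq P Q (i + 2 + 1) m f y ∂((if Even (i + 2) then P else Q) x)) =
      (∫ y, opSeq P Q (i + 1) m f y ∂((if Even i then P else Q) x))
    rw [show i + 2 + 1 = (i + 1) + 2 from rfl, ih (i + 1)]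
    congr 2
    simp [Nat.even_add_one, Nat.even_add]

lemma opSeq_mod_two (m : ℕ) (q r : ℕ) : opSeq P Q (2 * q + r) m f = opSeq P Q r m f := by
  induction q with
  | zero => simp
  | succ q ih => rw [show 2 * (q + 1) + r = (2 * q + r) + 2 by ring, opSeq_two_add, ih]

lemma covA_parity (i m : ℕ) : covA π P Q f i m = covA π P Q f (i % 2) m := by
  have h : opSeq P Q i m f = opSeq P Q (i % 2) m f := by
    conv_lhs => rw [show i = 2 * (i / 2) + i % 2 by omega]
    exact opSeq_mod_two P Q f m _ _
  unfold covA
  rw [h]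

lemma covA_zero (i : ℕ) : covA π P Q f i 0 = covA π P Q f 0 0 := by
  unfold covA
  congr 1

lemma sum_covA (m N : ℕ) : ∑ i ∈ Finset.range N, covA π P Q f i m =
    (((N + 1) / 2 : ℕ) : ℝ) * covA π P Q f 0 m + ((N / 2 : ℕ) : ℝ) * covA π P Q f 1 m := by
  induction N with
  | zero => simp
  | succ N ih =>
    rw [Finset.sum_range_succ, ih, covA_parity π P Q f N m]
    rcases Nat.even_or_odd N with h | h
    · obtain ⟨t, rfl⟩ := h
      have h1 : (t + t) % 2 = 0 := by omega
      have h2 : (t + t + 1 + 1) / 2 = (t + t + 1) / 2 + 1 := by omega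
      have h3 : (t + t + 1) / 2 = (t + t) / 2 := by omega
      rw [h1, h2, h3]
      push_cast
      ring
    · obtain ⟨t, rfl⟩ := h
      have h1 : (2 * t + 1) % 2 = 1 := by omega
      have h2 : (2 * t + 1 + 1 + 1) / 2 = (2 * t + 1 + 1) / 2 := by omega
      have h3 : (2 * t + 1 + 1) / 2 = (2 * t + 1) / 2 + 1 := by omega
      rw [h1, h2, h3]
      push_cast
      ring

lemma varA_succ (n : ℕ) :
    varA π P Q f (n + 1) = varA π P Q f n + covA π P Q f 0 0
      + 2 * ∑ i ∈ Finset.range n, covA π P Q f i (n - i) := by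
  unfold varA
  rw [Finset.sum_range_succ]
  have h1 : ∀ i ∈ Finset.range n,
      ∑ j ∈ Finset.range (n + 1), covA π P Q f (min i j) (max i j - min i j)
        = (∑ j ∈ Finset.range n, covA π P Q f (min i j) (max i j - min i j))
          + covA π P Q f i (n - i) := by
    intro i hi
    rw [Finset.sum_range_succ]
    have hle : i ≤ n := le_of_lt (Finset.mem_range.mp hi)
    rw [min_eq_left hle, max_eq_right hle]
  rw [Finset.sum_congr rfl h1, Finset.sum_add_distrib]
  have h2 : ∑ j ∈ Finset.range (n + 1), covA π P Q f (min n j) (max n j - min n j)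
      = (∑ j ∈ Finset.range n, covA π P Q f j (n - j)) + covA π P Q f 0 0 := by
    rw [Finset.sum_range_succ]
    congr 1
    · apply Finset.sum_congr rfl
      intro j hj
      have hle : j ≤ n := le_of_lt (Finset.mem_range.mp hj)
      rw [min_eq_right hle, max_eq_left hle]
    · simp [covA_zero]
  rw [h2]
  ring

lemma varA_eq (n : ℕ) : varA π P Q f n = n * covA π P Q f 0 0
    + 2 * ∑ k ∈ Finset.range n, ∑ i ∈ Finset.range k, covA π P Q f i (k - i) := by
  induction n with
  | zero => simp [varA]
  | succ n ih =>
    rw [varA_succ, ih, Finset.sum_range_succ]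
    push_cast
    ring

lemma reindexA (n : ℕ) :
    ∑ k ∈ Finset.range n, ∑ i ∈ Finset.range k, covA π P Q f i (k - i)
      = ∑ k ∈ Finset.range n, ∑ i ∈ Finset.range (n - (k + 1)), covA π P Q f i (k + 1) := by
  rw [Finset.sum_sigma', Finset.sum_sigma']
  apply Finset.sum_nbij' (fun p => ⟨p.1 - p.2 - 1, p.2⟩) (fun p => ⟨p.1 + 1 + p.2, p.2⟩)
  · intro p hp
    simp only [Finset.mem_sigma, Finset.mem_range] at hp ⊢
    omega
  · intro p hp
    simp only [Finset.mem_sigma, Finset.mem_range] at hp ⊢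
    omega
  · intro p hp
    simp only [Finset.mem_sigma, Finset.mem_range] at hp
    ext <;> simp <;> omega
  · intro p hp
    simp only [Finset.mem_sigma, Finset.mem_range] at hp
    ext <;> simp <;> omega
  · intro p hp
    simp only [Finset.mem_sigma, Finset.mem_range] at hp
    show covA π P Q f p.2 (p.1 - p.2) = covA π P Q f p.2 ((p.1 - p.2 - 1) + 1)
    congr 1
    omega

lemma ratio_tendsto_one (m : ℕ) (c : ℕ → ℕ) (h : ∀ n, m ≤ n → n - m ≤ c n ∧ c n ≤ n) :
    Tendsto (fun n : ℕ => (c n : ℝ) / n) atTop (𝓝 1) := by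
  rw [← tendsto_sub_nhds_zero_iff]
  apply squeeze_zero_norm' (a := fun n : ℕ => (m : ℝ) / n)
  · filter_upwards [eventually_ge_atTop (max m 1)] with n hn
    have hm : m ≤ n := le_trans (le_max_left _ _) hn
    have h1 : 1 ≤ n := le_trans (le_max_right _ _) hn
    obtain ⟨hlo, hhi⟩ := h n hm
    have hn0 : (0 : ℝ) < n := by positivity
    have hlo' : (n : ℝ) - m ≤ c n := by
      rw [← Nat.cast_sub hm]
      exact_mod_cast hlo
    have hhi' : (c n : ℝ) ≤ n := by exact_mod_cast hhi
    have heq : (c n : ℝ) / n - 1 = ((c n : ℝ) - n) / n := by field_simp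
    rw [Real.norm_eq_abs, heq, abs_div, abs_of_pos hn0]
    gcongr
    rw [abs_le]
    constructor <;> linarith
  · exact tendsto_const_div_atTop_nhds_zero_nat (m : ℝ)

end auxLemmas

/-- Existence and value of the asymptotic variance for an inhomogeneous Markov chain
alternating between two `π`-invariant kernels, under absolute summability of the
autocovariances: `lim (1/n) Var(Σ_{k<n} f(X_k)) = πf² - (πf)² + Σ_{k≥1} Cov(f(X₀), f(X_k))
+ Σ_{k≥1} Cov(f(X₁), f(X_{k+1}))`. -/
theorem stmt4 {X : Type*} [MeasurableSpace X] (π : Measure X) [IsProbabilityMeasure π]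
    (P Q : Kernel X X) [IsMarkovKernel P] [IsMarkovKernel Q]
    (hinvP : π.bind (fun x => P x) = π) (hinvQ : π.bind (fun x => Q x) = π)
    (f : X → ℝ) (hf : MemLp f 2 π)
    (hsum : Summable (fun k : ℕ => |covA π P Q f 0 (k + 1)| + |covA π P Q f 1 (k + 1)|)) :
    Tendsto (fun n : ℕ => varA π P Q f n / n) atTop
      (𝓝 ((∫ x, (f x) ^ 2 ∂π) - (∫ x, f x ∂π) ^ 2
        + ∑' k : ℕ, covA π P Q f 0 (k + 1) + ∑' k : ℕ, covA π P Q f 1 (k + 1))) := by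
  classical
  have hsa : Summable (fun k : ℕ => covA π P Q f 0 (k + 1)) :=
    Summable.of_abs (Summable.of_nonneg_of_le (fun k => abs_nonneg _)
      (fun k => le_add_of_nonneg_right (abs_nonneg _)) hsum)
  have hsb : Summable (fun k : ℕ => covA π P Q f 1 (k + 1)) :=
    Summable.of_abs (Summable.of_nonneg_of_le (fun k => abs_nonneg _)
      (fun k => le_add_of_nonneg_left (abs_nonneg _)) hsum)
  set F : ℕ → ℕ → ℝ := fun n k =>
    ((2 * ((n - (k + 1) + 1) / 2) : ℕ) : ℝ) / n * covA π P Q f 0 (k + 1)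
      + ((2 * ((n - (k + 1)) / 2) : ℕ) : ℝ) / n * covA π P Q f 1 (k + 1) with hF
  -- pointwise convergence
  have hFtend : ∀ k : ℕ, Tendsto (fun n => F n k) atTop
      (𝓝 (covA π P Q f 0 (k + 1) + covA π P Q f 1 (k + 1))) := by
    intro k
    have t1 : Tendsto (fun n : ℕ => ((2 * ((n - (k + 1) + 1) / 2) : ℕ) : ℝ) / n) atTop (𝓝 1) := by
      apply ratio_tendsto_one (k + 2)
      intro n hn
      constructor <;> omega
    have t2 : Tendsto (fun n : ℕ => ((2 * ((n - (k + 1)) / 2) : ℕ) : ℝ) / n) atTop (𝓝 1) := by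
      apply ratio_tendsto_one (k + 2)
      intro n hn
      constructor <;> omega
    simpa [hF] using (t1.mul_const (covA π P Q f 0 (k + 1))).add
      (t2.mul_const (covA π P Q f 1 (k + 1)))
  -- uniform bound
  have hFbound : ∀ᶠ n in atTop, ∀ k : ℕ,
      ‖F n k‖ ≤ |covA π P Q f 0 (k + 1)| + |covA π P Q f 1 (k + 1)| := by
    filter_upwards [eventually_ge_atTop 1] with n hn k
    have hn0 : (0 : ℝ) < n := by
      have : (1 : ℝ) ≤ n := by exact_mod_cast hn
      linarith
    have c1le : ((2 * ((n - (k + 1) + 1) / 2) : ℕ) : ℝ) / n ≤ 1 := by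
      rw [div_le_one hn0]
      exact_mod_cast (by omega : 2 * ((n - (k + 1) + 1) / 2) ≤ n)
    have c2le : ((2 * ((n - (k + 1)) / 2) : ℕ) : ℝ) / n ≤ 1 := by
      rw [div_le_one hn0]
      exact_mod_cast (by omega : 2 * ((n - (k + 1)) / 2) ≤ n)
    have c1nn : (0 : ℝ) ≤ ((2 * ((n - (k + 1) + 1) / 2) : ℕ) : ℝ) / n := by positivity
    have c2nn : (0 : ℝ) ≤ ((2 * ((n - (k + 1)) / 2) : ℕ) : ℝ) / n := by positivity
    rw [hF]
    simp only [Real.norm_eq_abs]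
    calc |((2 * ((n - (k + 1) + 1) / 2) : ℕ) : ℝ) / n * covA π P Q f 0 (k + 1)
          + ((2 * ((n - (k + 1)) / 2) : ℕ) : ℝ) / n * covA π P Q f 1 (k + 1)|
        ≤ |((2 * ((n - (k + 1) + 1) / 2) : ℕ) : ℝ) / n * covA π P Q f 0 (k + 1)|
          + |((2 * ((n - (k + 1)) / 2) : ℕ) : ℝ) / n * covA π P Q f 1 (k + 1)| := abs_add_le _ _
      _ = ((2 * ((n - (k + 1) + 1) / 2) : ℕ) : ℝ) / n * |covA π P Q f 0 (k + 1)|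
          + ((2 * ((n - (k + 1)) / 2) : ℕ) : ℝ) / n * |covA π P Q f 1 (k + 1)| := by
          rw [abs_mul, abs_mul, abs_of_nonneg c1nn, abs_of_nonneg c2nn]
      _ ≤ 1 * |covA π P Q f 0 (k + 1)| + 1 * |covA π P Q f 1 (k + 1)| := by
          gcongr <;> positivity
      _ = |covA π P Q f 0 (k + 1)| + |covA π P Q f 1 (k + 1)| := by ring
  have hDCT : Tendsto (fun n => ∑' k, F n k) atTop
      (𝓝 (∑' k : ℕ, (covA π P Q f 0 (k + 1) + covA π P Q f 1 (k + 1)))) :=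
    tendsto_tsum_of_dominated_convergence hsum hFtend hFbound
  -- identify the constant term
  have hc0 : covA π P Q f 0 0 = (∫ x, (f x) ^ 2 ∂π) - (∫ x, f x ∂π) ^ 2 := by
    unfold covA
    congr 1
    simp only [opSeq]
    congr 1
    funext x
    ring
  -- eventual equality
  have heq : ∀ᶠ n in atTop, varA π P Q f n / n = covA π P Q f 0 0 + ∑' k, F n k := by
    filter_upwards [eventually_ge_atTop 1] with n hn
    have hn0 : (n : ℝ) ≠ 0 := Nat.cast_ne_zero.mpr (by omega)
    have htsum : ∑' k, F n k = ∑ k ∈ Finset.range n, F n k := by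
      apply tsum_eq_sum
      intro k hk
      simp only [Finset.mem_range, not_lt] at hk
      have h1 : 2 * ((n - (k + 1) + 1) / 2) = 0 := by omega
      have h2 : 2 * ((n - (k + 1)) / 2) = 0 := by omega
      rw [hF]
      simp [h1, h2]
    rw [varA_eq, reindexA, htsum, add_div, mul_div_cancel_left₀ _ hn0]
    congr 1
    rw [Finset.mul_sum, Finset.sum_div]
    apply Finset.sum_congr rfl
    intro k hk
    rw [sum_covA, hF]
    push_cast
    field_simp
  have hfinal : (∫ x, (f x) ^ 2 ∂π) - (∫ x, f x ∂π) ^ 2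
      + ∑' k : ℕ, covA π P Q f 0 (k + 1) + ∑' k : ℕ, covA π P Q f 1 (k + 1)
      = covA π P Q f 0 0 + ∑' k : ℕ, (covA π P Q f 0 (k + 1) + covA π P Q f 1 (k + 1)) := by
    rw [Summable.tsum_add hsa hsb, hc0]
    ring
  rw [hfinal]
  exact Tendsto.congr' (heq.mono fun n h => h.symm) (tendsto_const_nhds.add hDCT)
end

section
/- Let P, Q be Markov kernels on (X, 𝒳) with invariant measure π such that the product kernel PQ is V-geometrically ergodic. Let (Xₖ) be the chain with X₀ ∼ π evolving alternatingly under P and Q. Then for every measurable f with |f|_{V^{1/2}} < ∞ and |Pf|_{V^{1/2}} < ∞, the series Σₖ≥₁ (|Cov(f(X₀), f(Xₖ))| + |Cov(f(X₁), f(Xₖ₊₁))|) converges. -/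
open MeasureTheory ProbabilityTheory
open scoped ENNReal

/-- `n`-step distributions `(PQ)ⁿ(x, ·)` of the product kernel `PQ`. -/
noncomputable def mIterPQ {X : Type*} [MeasurableSpace X] (P Q : Kernel X X) :
    ℕ → X → Measure X
  | 0, x => Measure.dirac x
  | n + 1, x => (mIterPQ P Q n x).bind (fun z => (P z).bind (fun w => Q w))

open Filter

namespace Stmt10Aux

variable {X : Type*} [MeasurableSpace X]

/-- Cauchy–Schwarz for integrals of nonnegative functions. -/
lemma cs_integral (μ : Measure X) {u v : X → ℝ}
    (hu : AEStronglyMeasurable u μ) (hv : AEStronglyMeasurable v μ)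
    (hu0 : 0 ≤ᵐ[μ] u) (hv0 : 0 ≤ᵐ[μ] v)
    (hu2 : Integrable (fun x => u x ^ 2) μ) (hv2 : Integrable (fun x => v x ^ 2) μ) :
    ∫ x, u x * v x ∂μ ≤ Real.sqrt (∫ x, u x ^ 2 ∂μ) * Real.sqrt (∫ x, v x ^ 2 ∂μ) := by
  have hpq : Real.HolderConjugate 2 2 := Real.HolderConjugate.two_two
  have h2 : ENNReal.ofReal (2:ℝ) = 2 := by norm_num
  have hMu : MemLp u (ENNReal.ofReal (2:ℝ)) μ := by
    rw [h2]; exact (memLp_two_iff_integrable_sq hu).mpr hu2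
  have hMv : MemLp v (ENNReal.ofReal (2:ℝ)) μ := by
    rw [h2]; exact (memLp_two_iff_integrable_sq hv).mpr hv2
  have := integral_mul_le_Lp_mul_Lq_of_nonneg hpq hu0 hv0 hMu hMv
  have e1 : ∀ w : X → ℝ, (∫ x, w x ^ (2:ℝ) ∂μ) = ∫ x, w x ^ 2 ∂μ := by
    intro w; congr 1; funext x; rw [Real.rpow_two]
  rw [e1, e1] at this
  calc ∫ x, u x * v x ∂μ ≤ (∫ x, u x ^ 2 ∂μ) ^ ((1:ℝ)/2) * (∫ x, v x ^ 2 ∂μ) ^ ((1:ℝ)/2) := this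
    _ = Real.sqrt (∫ x, u x ^ 2 ∂μ) * Real.sqrt (∫ x, v x ^ 2 ∂μ) := by
        rw [Real.sqrt_eq_rpow, Real.sqrt_eq_rpow]

/-- V-norm bounds on differences of probability measures upgrade to √V bounds. -/
lemma sqrt_ergodic (μ ν : Measure X) [IsProbabilityMeasure μ] [IsProbabilityMeasure ν]
    {V : X → ℝ} (hV1 : ∀ x, 1 ≤ V x) (hVm : Measurable V)
    (hμV : Integrable V μ) (hνV : Integrable V ν)
    {a : ℝ}
    (hyp : ∀ g : X → ℝ, Measurable g → (∀ z, |g z| ≤ V z) →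
      |(∫ z, g z ∂μ) - ∫ z, g z ∂ν| ≤ a)
    {g : X → ℝ} (hg : Measurable g) (hgb : ∀ z, |g z| ≤ Real.sqrt (V z)) :
    |(∫ z, g z ∂μ) - ∫ z, g z ∂ν| ≤ Real.sqrt (2 * a) := by
  have hV0 : ∀ z, (0:ℝ) ≤ V z := fun z => le_trans zero_le_one (hV1 z)
  have hsV : ∀ z, Real.sqrt (V z) ≤ V z := by
    intro z
    have : Real.sqrt (V z) ≤ Real.sqrt (V z * V z) :=
      Real.sqrt_le_sqrt (by nlinarith [hV1 z])
    rwa [Real.sqrt_mul_self (hV0 z)] at this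
  set m : Measure X := μ + ν with hm
  have hμm : μ ≪ m := by
    rw [hm]; exact Measure.absolutelyContinuous_of_le (Measure.le_add_right le_rfl)
  have hνm : ν ≪ m := by
    rw [hm]; exact Measure.absolutelyContinuous_of_le (Measure.le_add_left le_rfl)
  set p : X → ℝ≥0∞ := μ.rnDeriv m with hp
  set q : X → ℝ≥0∞ := ν.rnDeriv m with hq
  set d : X → ℝ := fun x => (p x).toReal - (q x).toReal with hd
  have hpm : Measurable p := Measure.measurable_rnDeriv μ m
  have hqm : Measurable q := Measure.measurable_rnDeriv ν m
  have hdm : Measurable d := hpm.ennreal_toReal.sub hqm.ennreal_toReal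
  have hIV : ∀ (h : X → ℝ), Measurable h → (∀ z, |h z| ≤ V z) →
      Integrable h μ ∧ Integrable h ν := by
    intro h hh hb
    constructor <;>
      exact Integrable.mono' (by assumption) hh.aestronglyMeasurable
        (Eventually.of_forall fun z => by simpa using hb z)
  have key1 : ∀ (h : X → ℝ), Measurable h → (∀ z, |h z| ≤ V z) →
      (∫ z, h z ∂μ) - ∫ z, h z ∂ν = ∫ x, h x * d x ∂m := by
    intro h hh hb
    obtain ⟨hIμ, hIν⟩ := hIV h hh hb
    have e1 : ∫ x, (p x).toReal • h x ∂m = ∫ z, h z ∂μ :=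
      MeasureTheory.integral_rnDeriv_smul hμm
    have e2 : ∫ x, (q x).toReal • h x ∂m = ∫ z, h z ∂ν :=
      MeasureTheory.integral_rnDeriv_smul hνm
    have i1 : Integrable (fun x => (p x).toReal • h x) m :=
      (MeasureTheory.integrable_rnDeriv_smul_iff hμm).mpr hIμ
    have i2 : Integrable (fun x => (q x).toReal • h x) m :=
      (MeasureTheory.integrable_rnDeriv_smul_iff hνm).mpr hIν
    calc (∫ z, h z ∂μ) - ∫ z, h z ∂ν
        = ∫ x, ((p x).toReal • h x - (q x).toReal • h x) ∂m := by
          rw [integral_sub i1 i2, e1, e2]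
      _ = ∫ x, h x * d x ∂m := by
          congr 1; funext x; simp only [smul_eq_mul]; ring
  have hIhd : ∀ (h : X → ℝ), Measurable h → (∀ z, |h z| ≤ V z) →
      Integrable (fun x => h x * d x) m := by
    intro h hh hb
    obtain ⟨hIμ, hIν⟩ := hIV h hh hb
    have i1 : Integrable (fun x => (p x).toReal • h x) m :=
      (MeasureTheory.integrable_rnDeriv_smul_iff hμm).mpr hIμ
    have i2 : Integrable (fun x => (q x).toReal • h x) m :=
      (MeasureTheory.integrable_rnDeriv_smul_iff hνm).mpr hIν
    refine (i1.sub i2).congr (Eventually.of_forall fun x => ?_)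
    simp only [Pi.sub_apply, smul_eq_mul]; ring
  set s : Set X := {x | q x ≤ p x} with hs
  have hsM : MeasurableSet s := measurableSet_le hqm hpm
  classical
  set g₀ : X → ℝ := fun x => if x ∈ s then V x else -V x with hg₀
  have hg₀m : Measurable g₀ := Measurable.ite hsM hVm hVm.neg
  have hg₀b : ∀ z, |g₀ z| ≤ V z := by
    intro z
    show |if z ∈ s then V z else -V z| ≤ V z
    by_cases hz : z ∈ s <;>
      simp [hz, abs_of_nonneg (hV0 z), abs_of_nonpos (neg_nonpos.mpr (hV0 z))]
  have hfin : ∀ᵐ x ∂m, p x < ⊤ ∧ q x < ⊤ := by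
    filter_upwards [Measure.rnDeriv_lt_top μ m, Measure.rnDeriv_lt_top ν m] with x h1 h2
    exact ⟨h1, h2⟩
  have hg₀d : ∀ᵐ x ∂m, g₀ x * d x = V x * |d x| := by
    filter_upwards [hfin] with x hx
    show (if x ∈ s then V x else -V x) * ((p x).toReal - (q x).toReal)
        = V x * |(p x).toReal - (q x).toReal|
    by_cases hzs : x ∈ s
    · have : (q x).toReal ≤ (p x).toReal := ENNReal.toReal_mono hx.1.ne hzs
      rw [if_pos hzs, abs_of_nonneg (by linarith)]
    · have hlt : p x < q x := lt_of_not_ge hzs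
      have : (p x).toReal ≤ (q x).toReal := ENNReal.toReal_mono hx.2.ne hlt.le
      rw [if_neg hzs, abs_of_nonpos (by linarith)]; ring
  have ha : 0 ≤ a := by
    have := hyp (fun _ => 0) measurable_const (fun z => by simpa using hV0 z)
    simpa using le_trans (abs_nonneg _) this
  have hVd_int : Integrable (fun x => V x * |d x|) m :=
    (hIhd g₀ hg₀m hg₀b).congr hg₀d
  have hT : ∫ x, V x * |d x| ∂m ≤ a := by
    have e : ∫ x, V x * |d x| ∂m = (∫ z, g₀ z ∂μ) - ∫ z, g₀ z ∂ν := by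
      rw [key1 g₀ hg₀m hg₀b]; exact (integral_congr_ae hg₀d).symm
    rw [e]
    exact le_trans (le_abs_self _) (hyp g₀ hg₀m hg₀b)
  have hpint : Integrable (fun x => (p x).toReal) m := Measure.integrable_toReal_rnDeriv
  have hqint : Integrable (fun x => (q x).toReal) m := Measure.integrable_toReal_rnDeriv
  have hdint : Integrable d m := hpint.sub hqint
  have hT2 : ∫ x, |d x| ∂m ≤ 2 := by
    have h1 : ∫ x, |d x| ∂m ≤ ∫ x, ((p x).toReal + (q x).toReal) ∂m := by
      refine integral_mono hdint.abs (hpint.add hqint) fun x => ?_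
      show |(p x).toReal - (q x).toReal| ≤ _
      exact le_trans (abs_sub _ _) (by simp [abs_of_nonneg ENNReal.toReal_nonneg])
    have h2 : ∫ x, ((p x).toReal + (q x).toReal) ∂m = 2 := by
      rw [integral_add hpint hqint, Measure.integral_toReal_rnDeriv hμm,
        Measure.integral_toReal_rnDeriv hνm]
      simp; norm_num
    linarith
  have hgV : ∀ z, |g z| ≤ V z := fun z => le_trans (hgb z) (hsV z)
  have hsqVd_int : Integrable (fun x => Real.sqrt (V x) * |d x|) m := by
    refine Integrable.mono' hVd_int ((hVm.sqrt.mul hdm.abs).aestronglyMeasurable)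
      (Eventually.of_forall fun x => ?_)
    have h0 : (0:ℝ) ≤ Real.sqrt (V x) * |d x| :=
      mul_nonneg (Real.sqrt_nonneg _) (abs_nonneg _)
    rw [Real.norm_eq_abs, abs_of_nonneg h0]
    exact mul_le_mul_of_nonneg_right (hsV x) (abs_nonneg _)
  have step1 : |(∫ z, g z ∂μ) - ∫ z, g z ∂ν| ≤ ∫ x, Real.sqrt (V x) * |d x| ∂m := by
    rw [key1 g hg hgV]
    refine le_trans (le_of_eq (Real.norm_eq_abs _).symm) ?_
    refine le_trans (norm_integral_le_integral_norm _) ?_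
    refine integral_mono (hIhd g hg hgV).norm hsqVd_int fun x => ?_
    rw [Real.norm_eq_abs, abs_mul]
    exact mul_le_mul_of_nonneg_right (hgb x) (abs_nonneg _)
  have step2 : ∫ x, Real.sqrt (V x) * |d x| ∂m
      ≤ Real.sqrt (∫ x, V x * |d x| ∂m) * Real.sqrt (∫ x, |d x| ∂m) := by
    have hcs := cs_integral m
      (u := fun x => Real.sqrt (V x) * Real.sqrt |d x|) (v := fun x => Real.sqrt |d x|)
      ((hVm.sqrt.mul hdm.abs.sqrt).aestronglyMeasurable) (hdm.abs.sqrt.aestronglyMeasurable)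
      (Eventually.of_forall fun x => mul_nonneg (Real.sqrt_nonneg _) (Real.sqrt_nonneg _))
      (Eventually.of_forall fun x => Real.sqrt_nonneg _)
      (hVd_int.congr (Eventually.of_forall fun x => by
        show V x * |d x| = (Real.sqrt (V x) * Real.sqrt |d x|) ^ 2
        rw [mul_pow, Real.sq_sqrt (hV0 x), Real.sq_sqrt (abs_nonneg _)]))
      (hdint.abs.congr (Eventually.of_forall fun x => by
        show |d x| = (Real.sqrt |d x|) ^ 2
        rw [Real.sq_sqrt (abs_nonneg _)]))
    have e1 : ∫ x, (Real.sqrt (V x) * Real.sqrt |d x|) * Real.sqrt |d x| ∂m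
        = ∫ x, Real.sqrt (V x) * |d x| ∂m := by
      congr 1; funext x
      rw [mul_assoc, Real.mul_self_sqrt (abs_nonneg _)]
    have e2 : ∫ x, (Real.sqrt (V x) * Real.sqrt |d x|) ^ 2 ∂m = ∫ x, V x * |d x| ∂m := by
      congr 1; funext x
      rw [mul_pow, Real.sq_sqrt (hV0 x), Real.sq_sqrt (abs_nonneg _)]
    have e3 : ∫ x, (Real.sqrt |d x|) ^ 2 ∂m = ∫ x, |d x| ∂m := by
      congr 1; funext x; rw [Real.sq_sqrt (abs_nonneg _)]
    rw [e1, e2, e3] at hcs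
    exact hcs
  have step3 : Real.sqrt (∫ x, V x * |d x| ∂m) * Real.sqrt (∫ x, |d x| ∂m)
      ≤ Real.sqrt (2 * a) := by
    have := mul_le_mul (Real.sqrt_le_sqrt hT) (Real.sqrt_le_sqrt hT2)
      (Real.sqrt_nonneg _) (Real.sqrt_nonneg _)
    calc Real.sqrt (∫ x, V x * |d x| ∂m) * Real.sqrt (∫ x, |d x| ∂m)
        ≤ Real.sqrt a * Real.sqrt 2 := this
      _ = Real.sqrt (2 * a) := by rw [← Real.sqrt_mul ha, mul_comm]
  exact le_trans step1 (le_trans step2 step3)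

noncomputable def itk (P Q : Kernel X X) : ℕ → Kernel X X
  | 0 => Kernel.id
  | n + 1 => itk P Q n ∘ₖ (Q ∘ₖ P)

instance itk_markov (P Q : Kernel X X) [IsMarkovKernel P] [IsMarkovKernel Q] (n : ℕ) :
    IsMarkovKernel (itk P Q n) := by
  induction n with
  | zero => rw [itk]; infer_instance
  | succ n ih => rw [itk]; infer_instance

lemma itk_comm (P Q : Kernel X X) [IsMarkovKernel P] [IsMarkovKernel Q] (n : ℕ) :
    (Q ∘ₖ P) ∘ₖ itk P Q n = itk P Q n ∘ₖ (Q ∘ₖ P) := by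
  induction n with
  | zero => rw [itk, Kernel.comp_id, Kernel.id_comp]
  | succ n ih => rw [itk, ← Kernel.comp_assoc, ih, Kernel.comp_assoc]

lemma mIterPQ_eq_itk (P Q : Kernel X X) [IsMarkovKernel P] [IsMarkovKernel Q] (n : ℕ) (x : X) :
    mIterPQ P Q n x = itk P Q n x := by
  induction n generalizing x with
  | zero => rw [mIterPQ, itk, Kernel.id_apply]
  | succ n ih =>
    rw [mIterPQ, itk]
    have h1 : (fun z => (P z).bind (fun w => Q w)) = fun z => (Q ∘ₖ P) z := by
      funext z; rw [Kernel.comp_apply]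
    rw [h1]
    have h2 : (mIterPQ P Q n x).bind (fun z => (Q ∘ₖ P) z) = ((Q ∘ₖ P) ∘ₖ itk P Q n) x := by
      rw [ih, Kernel.comp_apply]
    rw [h2, itk_comm]

lemma meas_kernel_integral {κ : Kernel X X} [IsSFiniteKernel κ] {h : X → ℝ}
    (hh : Measurable h) : Measurable fun x => ∫ z, h z ∂κ x :=
  (MeasureTheory.StronglyMeasurable.integral_kernel_prod_right'
    (κ := κ) (f := fun p : X × X => h p.2)
    ((hh.comp measurable_snd).stronglyMeasurable)).measurable

lemma integral_comp' (η κ : Kernel X X) [IsSFiniteKernel η] [IsSFiniteKernel κ] (x : X)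
    {f : X → ℝ} (hfm : Measurable f) (hfi : Integrable f ((η ∘ₖ κ) x)) :
    ∫ z, f z ∂(η ∘ₖ κ) x = ∫ y, ∫ z, f z ∂η y ∂κ x := by
  have hsnd : (η ∘ₖ κ) x = ((κ ⊗ₖ Kernel.prodMkLeft X η) x).map Prod.snd := by
    rw [Kernel.comp_eq_snd_compProd, Kernel.snd_apply]
  have hint2 : Integrable (fun p : X × X => f p.2) ((κ ⊗ₖ Kernel.prodMkLeft X η) x) := by
    rw [hsnd] at hfi
    exact (integrable_map_measure hfm.aestronglyMeasurable measurable_snd.aemeasurable).mp hfi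
  rw [hsnd, integral_map measurable_snd.aemeasurable hfm.aestronglyMeasurable]
  rw [ProbabilityTheory.integral_compProd hint2]
  simp [Kernel.prodMkLeft_apply]

lemma opSeq_parity (P Q : Kernel X X) (f : X → ℝ) (m : ℕ) :
    ∀ i, opSeq P Q (i + 2) m f = opSeq P Q i m f := by
  induction m with
  | zero => intro i; rfl
  | succ m ih =>
    intro i
    show (fun x => ∫ y, opSeq P Q (i + 2 + 1) m f y ∂((if Even (i + 2) then P else Q) x)) = _
    have he : Even (i + 2) ↔ Even i := by simp [Nat.even_add]
    have h1 : (if Even (i + 2) then P else Q) = (if Even i then P else Q) := by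
      by_cases h : Even i
      · rw [if_pos (he.mpr h), if_pos h]
      · rw [if_neg (fun hc => h (he.mp hc)), if_neg h]
    have h2 : opSeq P Q (i + 2 + 1) m f = opSeq P Q (i + 1) m f := by
      have : i + 2 + 1 = (i + 1) + 2 := by ring
      rw [this, ih]
    rw [h1, h2]
    rfl

lemma sqrt_pow_eq {x : ℝ} (hx : 0 ≤ x) (n : ℕ) :
    Real.sqrt (x ^ n) = Real.sqrt x ^ n := by
  induction n with
  | zero => simp
  | succ n ih => rw [pow_succ, Real.sqrt_mul (pow_nonneg hx n), ih, pow_succ]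

end Stmt10Aux

open Stmt10Aux

/-- If the product kernel `PQ` is `V`-geometrically ergodic (the `V`-norm bound expressed
via measurable test functions `|g| ≤ V`, together with the drift condition
`PQV ≤ λV + b`), then for every `f` with `|f|_{V^{1/2}} < ∞` and `|Pf|_{V^{1/2}} < ∞`,
the autocovariance series of the alternating chain is absolutely summable. -/
theorem stmt10 {X : Type*} [MeasurableSpace X] (π : Measure X) [IsProbabilityMeasure π]
    (P Q : Kernel X X) [IsMarkovKernel P] [IsMarkovKernel Q]
    (hinvP : π.bind (fun x => P x) = π) (hinvQ : π.bind (fun x => Q x) = π)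
    (V : X → ℝ) (hV1 : ∀ x, 1 ≤ V x) (hVm : Measurable V) (hπV : Integrable V π)
    (hprob : ∀ (n : ℕ) (x : X), IsProbabilityMeasure (mIterPQ P Q n x))
    (hVint : ∀ (n : ℕ) (x : X), Integrable V (mIterPQ P Q n x))
    (C ρ : ℝ) (hC : 0 ≤ C) (hρ0 : 0 < ρ) (hρ1 : ρ < 1)
    (hgeo : ∀ g : X → ℝ, Measurable g → (∀ z, |g z| ≤ V z) →
      ∀ (n : ℕ) (x : X),
        |(∫ z, g z ∂(mIterPQ P Q n x)) - ∫ z, g z ∂π| ≤ C * ρ ^ n * V x)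
    (lam b : ℝ) (hlam0 : 0 < lam) (hlam1 : lam < 1) (hb : 0 ≤ b)
    (hdrift : ∀ x, (∫ y, (∫ z, V z ∂(Q y)) ∂(P x)) ≤ lam * V x + b)
    (f : X → ℝ) (hfm : Measurable f)
    (c1 : ℝ) (hf : ∀ x, |f x| ≤ c1 * Real.sqrt (V x))
    (c2 : ℝ) (hPf : ∀ x, |∫ y, f y ∂(P x)| ≤ c2 * Real.sqrt (V x)) :
    Summable (fun k : ℕ => |covA π P Q f 0 (k + 1)| + |covA π P Q f 1 (k + 1)|) := by
    classical
  have hXne : Nonempty X := by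
    by_contra h
    have huniv : (Set.univ : Set X) = ∅ := Set.univ_eq_empty_iff.mpr (not_nonempty_iff.mp h)
    have h1 : π Set.univ = 1 := measure_univ
    rw [huniv, measure_empty] at h1
    exact zero_ne_one h1
  obtain ⟨x₀⟩ := hXne
  have hV0 : ∀ z, (0:ℝ) ≤ V z := fun z => le_trans zero_le_one (hV1 z)
  have hsV : ∀ z, Real.sqrt (V z) ≤ V z := fun z => by
    have h := Real.sqrt_le_sqrt (show V z ≤ V z * V z by nlinarith [hV1 z])
    rwa [Real.sqrt_mul_self (hV0 z)] at h
  have hsV1 : ∀ z, (1:ℝ) ≤ Real.sqrt (V z) := fun z => by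
    rw [show (1:ℝ) = Real.sqrt 1 by simp]; exact Real.sqrt_le_sqrt (hV1 z)
  have hsVpos : ∀ z, (0:ℝ) < Real.sqrt (V z) := fun z => lt_of_lt_of_le one_pos (hsV1 z)
  have hc1 : 0 ≤ c1 := by nlinarith [hf x₀, abs_nonneg (f x₀), hsVpos x₀]
  have hc2 : 0 ≤ c2 := by nlinarith [hPf x₀, abs_nonneg (∫ y, f y ∂(P x₀)), hsVpos x₀]
  have hVint' : ∀ (n : ℕ) (x : X), Integrable V (itk P Q n x) := fun n x => by
    rw [← mIterPQ_eq_itk]; exact hVint n x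
  have hgeo' : ∀ g : X → ℝ, Measurable g → (∀ z, |g z| ≤ V z) → ∀ (n : ℕ) (x : X),
      |(∫ z, g z ∂(itk P Q n x)) - ∫ z, g z ∂π| ≤ C * ρ ^ n * V x := by
    intro g hg hb' n x
    rw [← mIterPQ_eq_itk]; exact hgeo g hg hb' n x
  have hIntOf : ∀ (h : X → ℝ), Measurable h → ∀ c : ℝ, 0 ≤ c →
      (∀ z, |h z| ≤ c * Real.sqrt (V z)) → ∀ (μ' : Measure X), Integrable V μ' →
      Integrable h μ' := by
    intro h hh c hc hb' μ' hμ'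
    refine Integrable.mono' (hμ'.const_mul c) hh.aestronglyMeasurable
      (Eventually.of_forall fun z => ?_)
    rw [Real.norm_eq_abs]
    exact le_trans (hb' z) (mul_le_mul_of_nonneg_left (hsV z) hc)
  set Pf : X → ℝ := fun x => ∫ y, f y ∂P x with hPfdef
  have hPfm : Measurable Pf := meas_kernel_integral hfm
  set t : ℝ := Real.sqrt ρ with htdef
  have ht0 : 0 < t := Real.sqrt_pos.mpr hρ0
  have ht1 : t < 1 := by
    rw [htdef, show (1:ℝ) = Real.sqrt 1 by simp]
    exact Real.sqrt_lt_sqrt hρ0.le hρ1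
  -- the key √V estimate
  have key : ∀ (h : X → ℝ), Measurable h → ∀ c : ℝ, 0 ≤ c →
      (∀ z, |h z| ≤ c * Real.sqrt (V z)) → ∀ (n : ℕ) (x : X),
      |(∫ z, h z ∂(itk P Q n x)) - ∫ z, h z ∂π|
        ≤ (max c 1 * Real.sqrt (2 * C)) * t ^ n * Real.sqrt (V x) := by
    intro h hh c hc hb' n x
    have hc'0 : (0:ℝ) < max c 1 := lt_of_lt_of_le one_pos (le_max_right _ _)
    have hgb : ∀ z, |(max c 1)⁻¹ * h z| ≤ Real.sqrt (V z) := by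
      intro z
      rw [abs_mul, abs_of_pos (inv_pos.mpr hc'0), inv_mul_le_iff₀ hc'0]
      exact le_trans (hb' z)
        (mul_le_mul_of_nonneg_right (le_max_left _ _) (Real.sqrt_nonneg _))
    have ha' : ∀ g : X → ℝ, Measurable g → (∀ z, |g z| ≤ V z) →
        |(∫ z, g z ∂(itk P Q n x)) - ∫ z, g z ∂π| ≤ C * ρ ^ n * V x :=
      fun g hg hgV => hgeo' g hg hgV n x
    have happ := sqrt_ergodic (itk P Q n x) π hV1 hVm
      (hVint' n x) hπV ha' (measurable_const.mul hh) hgb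
    simp only [Pi.mul_apply] at happ
    rw [integral_const_mul, integral_const_mul, ← mul_sub, abs_mul,
      abs_of_pos (inv_pos.mpr hc'0), inv_mul_le_iff₀ hc'0] at happ
    have e2 : Real.sqrt (2 * (C * ρ ^ n * V x))
        = Real.sqrt (2 * C) * t ^ n * Real.sqrt (V x) := by
      rw [show 2 * (C * ρ ^ n * V x) = ((2 * C) * ρ ^ n) * V x by ring,
        Real.sqrt_mul (by positivity), Real.sqrt_mul (by positivity : (0:ℝ) ≤ 2 * C),
        sqrt_pow_eq hρ0.le, htdef]
    calc |(∫ z, h z ∂(itk P Q n x)) - ∫ z, h z ∂π|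
        ≤ max c 1 * Real.sqrt (2 * (C * ρ ^ n * V x)) := happ
      _ = (max c 1 * Real.sqrt (2 * C)) * t ^ n * Real.sqrt (V x) := by rw [e2]; ring
  -- unfolding lemmas for opSeq
  have hform_even : ∀ m, opSeq P Q 0 (m+1) f = fun x => ∫ y, opSeq P Q 1 m f y ∂P x := by
    intro m; funext x
    show (∫ y, opSeq P Q 1 m f y ∂((if Even 0 then P else Q) x)) = _
    rw [if_pos (by decide : Even 0)]
  have hform_odd : ∀ m, opSeq P Q 1 (m+1) f = fun y => ∫ w, opSeq P Q 0 m f w ∂Q y := by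
    intro m; funext y
    show (∫ w, opSeq P Q 2 m f w ∂((if Even 1 then P else Q) y)) = _
    rw [if_neg (by decide : ¬ Even 1), opSeq_parity P Q f m 0]
  -- integrability facts
  have hofReal : ∀ (μ' : Measure X), Integrable V μ' →
      ∫⁻ z, ENNReal.ofReal (V z) ∂μ' < ⊤ := by
    intro μ' h
    have h2 := h.hasFiniteIntegral
    calc ∫⁻ z, ENNReal.ofReal (V z) ∂μ' = ∫⁻ z, (‖V z‖₊ : ℝ≥0∞) ∂μ' :=
          lintegral_congr fun z => (Real.enorm_eq_ofReal (hV0 z)).symm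
      _ < ⊤ := h2
  have hΦint : ∀ (n : ℕ) (x : X),
      Integrable (fun w => ∫ z, V z ∂(itk P Q n w)) ((Q ∘ₖ P) x) := by
    intro n x
    have hm : Measurable (fun w => ∫ z, V z ∂(itk P Q n w)) := meas_kernel_integral hVm
    refine ⟨hm.aestronglyMeasurable, ?_⟩
    show ∫⁻ w, (‖∫ z, V z ∂(itk P Q n w)‖₊ : ℝ≥0∞) ∂((Q ∘ₖ P) x) < ⊤
    calc ∫⁻ w, (‖∫ z, V z ∂(itk P Q n w)‖₊ : ℝ≥0∞) ∂((Q ∘ₖ P) x)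
        = ∫⁻ w, (∫⁻ z, ENNReal.ofReal (V z) ∂(itk P Q n w)) ∂((Q ∘ₖ P) x) := by
          refine lintegral_congr fun w => ?_
          rw [← enorm_eq_nnnorm, Real.enorm_eq_ofReal (integral_nonneg hV0),
            ofReal_integral_eq_lintegral_ofReal (hVint' n w) (Eventually.of_forall hV0)]
      _ = ∫⁻ z, ENNReal.ofReal (V z) ∂((itk P Q n ∘ₖ (Q ∘ₖ P)) x) :=
          (Kernel.lintegral_comp _ _ _ hVm.ennreal_ofReal).symm
      _ < ⊤ := hofReal _ (hVint' (n+1) x)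
  have hGint : ∀ (h : X → ℝ), Measurable h → ∀ c : ℝ, 0 ≤ c →
      (∀ z, |h z| ≤ c * Real.sqrt (V z)) → ∀ (n : ℕ) (x : X),
      Integrable (fun w => ∫ z, h z ∂(itk P Q n w)) ((Q ∘ₖ P) x) := by
    intro h hh c hc hb' n x
    refine Integrable.mono' ((hΦint n x).const_mul c)
      (meas_kernel_integral hh).aestronglyMeasurable
      (Eventually.of_forall fun w => ?_)
    calc ‖∫ z, h z ∂(itk P Q n w)‖ ≤ ∫ z, ‖h z‖ ∂(itk P Q n w) :=
          norm_integral_le_integral_norm _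
      _ ≤ ∫ z, c * V z ∂(itk P Q n w) := by
          refine integral_mono (hIntOf h hh c hc hb' _ (hVint' n w)).norm
            ((hVint' n w).const_mul c) fun z => ?_
          rw [Real.norm_eq_abs]
          exact le_trans (hb' z) (mul_le_mul_of_nonneg_left (hsV z) hc)
      _ = c * ∫ z, V z ∂(itk P Q n w) := integral_const_mul c V
  -- iteration step
  have hstep : ∀ (h : X → ℝ), Measurable h → ∀ c : ℝ, 0 ≤ c →
      (∀ z, |h z| ≤ c * Real.sqrt (V z)) → ∀ (n : ℕ) (x : X),
      ∫ z, h z ∂(itk P Q (n+1) x)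
        = ∫ y, ∫ w, (∫ z, h z ∂(itk P Q n w)) ∂Q y ∂P x := by
    intro h hh c hc hb' n x
    rw [show itk P Q (n+1) = itk P Q n ∘ₖ (Q ∘ₖ P) from rfl]
    rw [integral_comp' (itk P Q n) (Q ∘ₖ P) x hh
      (hIntOf h hh c hc hb' _ (hVint' (n+1) x))]
    rw [integral_comp' Q P x (meas_kernel_integral hh) (hGint h hh c hc hb' n x)]
  -- closed forms of opSeq
  have hGa : ∀ n, opSeq P Q 0 (2*n) f = fun x => ∫ z, f z ∂(itk P Q n x) := by
    intro n
    induction n with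
    | zero =>
      funext x
      show f x = ∫ z, f z ∂(itk P Q 0 x)
      rw [show itk P Q 0 = Kernel.id from rfl, Kernel.id_apply,
        integral_dirac' f x hfm.stronglyMeasurable]
    | succ n ih =>
      funext x
      rw [show 2*(n+1) = (2*n+1)+1 by ring]
      simp only [hform_even, hform_odd, ih]
      exact (hstep f hfm c1 hc1 hf n x).symm
  have hGb : ∀ n, opSeq P Q 0 (2*n+1) f = fun x => ∫ z, Pf z ∂(itk P Q n x) := by
    intro n
    induction n with
    | zero =>
      funext x
      rw [show 2*0+1 = 0+1 by ring]
      simp only [hform_even]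
      show (∫ y, opSeq P Q 1 0 f y ∂P x) = ∫ z, Pf z ∂(itk P Q 0 x)
      rw [show itk P Q 0 = Kernel.id from rfl, Kernel.id_apply,
        integral_dirac' Pf x hPfm.stronglyMeasurable]
      rfl
    | succ n ih =>
      funext x
      rw [show 2*(n+1)+1 = (2*n+1)+1+1 by ring]
      simp only [hform_even ((2*n+1)+1), hform_odd (2*n+1), ih]
      exact (hstep Pf hPfm c2 hc2 hPf n x).symm
  have hfπ : Integrable f π := hIntOf f hfm c1 hc1 hf π hπV
  -- invariance gives ∫ Pf dπ = ∫ f dπ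
  have hπPf : ∫ z, Pf z ∂π = ∫ x, f x ∂π := by
    have hbind : π.bind (fun x => P x) = (P ∘ₖ Kernel.const X π) x₀ := by
      rw [Kernel.comp_apply, Kernel.const_apply]
    have hint : Integrable f ((P ∘ₖ Kernel.const X π) x₀) := by
      rw [← hbind, hinvP]; exact hfπ
    have h3 := integral_comp' P (Kernel.const X π) x₀ hfm hint
    rw [← hbind, hinvP, Kernel.const_apply] at h3
    exact h3.symm
  -- case i = 0 covariance bound
  have caseA : ∀ (G : X → ℝ), Measurable G → ∀ D : ℝ, 0 ≤ D →
      (∀ x, |G x - ∫ x, f x ∂π| ≤ D * Real.sqrt (V x)) →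
      |(∫ x, f x * G x ∂π) - (∫ x, f x ∂π)^2| ≤ c1 * D * ∫ x, V x ∂π := by
    intro G hGm D hD hbnd
    set μf := ∫ x, f x ∂π with hμf
    have hptw : ∀ x, ‖f x * (G x - μf)‖ ≤ c1 * D * V x := by
      intro x
      rw [Real.norm_eq_abs, abs_mul]
      calc |f x| * |G x - μf|
          ≤ (c1 * Real.sqrt (V x)) * (D * Real.sqrt (V x)) :=
            mul_le_mul (hf x) (hbnd x) (abs_nonneg _) (by positivity)
        _ = c1 * D * (Real.sqrt (V x) * Real.sqrt (V x)) := by ring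
        _ = c1 * D * V x := by rw [Real.mul_self_sqrt (hV0 x)]
    have hfe_int : Integrable (fun x => f x * (G x - μf)) π := by
      refine Integrable.mono' (hπV.const_mul (c1 * D))
        (hfm.mul (hGm.sub measurable_const)).aestronglyMeasurable
        (Eventually.of_forall hptw)
    have hsplit : ∫ x, f x * G x ∂π = (∫ x, f x * (G x - μf) ∂π) + μf * μf := by
      have e : (fun x => f x * G x) = fun x => f x * (G x - μf) + μf * f x := by
        funext x; ring
      rw [e, integral_add hfe_int (hfπ.const_mul μf), integral_const_mul]
    rw [hsplit, show (∫ x, f x * (G x - μf) ∂π) + μf * μf - μf^2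
        = ∫ x, f x * (G x - μf) ∂π by ring]
    calc |∫ x, f x * (G x - μf) ∂π| ≤ ∫ x, ‖f x * (G x - μf)‖ ∂π := by
          rw [← Real.norm_eq_abs]; exact norm_integral_le_integral_norm _
      _ ≤ ∫ x, c1 * D * V x ∂π :=
          integral_mono hfe_int.norm (hπV.const_mul _) hptw
      _ = c1 * D * ∫ x, V x ∂π := integral_const_mul _ _
  -- case i = 1 covariance bound
  have caseB : ∀ (G : X → ℝ), Measurable G → ∀ D : ℝ, 0 ≤ D →
      (∀ x, |G x - ∫ x, f x ∂π| ≤ D * Real.sqrt (V x)) →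
      |(∫ y, f y * (∫ w, G w ∂Q y) ∂π) - (∫ x, f x ∂π)^2| ≤ c1 * D * ∫ x, V x ∂π := by
    intro G hGm D hD hbnd
    set μf := ∫ x, f x ∂π with hμf
    set W : X → ℝ := fun y => ∫ z, V z ∂Q y with hW
    have hWm : Measurable W := meas_kernel_integral hVm
    have hW0 : ∀ y, 0 ≤ W y := fun y => integral_nonneg hV0
    have hlQ : ∫⁻ y, (∫⁻ z, ENNReal.ofReal (V z) ∂Q y) ∂π
        = ∫⁻ z, ENNReal.ofReal (V z) ∂π := by
      conv_rhs => rw [← hinvQ]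
      rw [Measure.lintegral_bind Q.measurable.aemeasurable hVm.ennreal_ofReal.aemeasurable]
    have hπVfin : ∫⁻ z, ENNReal.ofReal (V z) ∂π < ⊤ := hofReal π hπV
    have hQae : ∀ᵐ y ∂π, Integrable V (Q y) := by
      have hmeas : Measurable fun y => ∫⁻ z, ENNReal.ofReal (V z) ∂Q y :=
        Measurable.lintegral_kernel (κ := Q) hVm.ennreal_ofReal
      have hne : ∫⁻ y, (∫⁻ z, ENNReal.ofReal (V z) ∂Q y) ∂π ≠ ⊤ := by
        rw [hlQ]; exact hπVfin.ne
      filter_upwards [ae_lt_top hmeas hne] with y hy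
      refine ⟨hVm.aestronglyMeasurable, ?_⟩
      show ∫⁻ z, (‖V z‖₊ : ℝ≥0∞) ∂Q y < ⊤
      calc ∫⁻ z, (‖V z‖₊ : ℝ≥0∞) ∂Q y = ∫⁻ z, ENNReal.ofReal (V z) ∂Q y :=
            lintegral_congr fun z => Real.enorm_eq_ofReal (hV0 z)
        _ < ⊤ := hy
    have hWofReal : ∀ y, ENNReal.ofReal (W y) ≤ ∫⁻ z, ENNReal.ofReal (V z) ∂Q y := by
      intro y
      by_cases hy : Integrable V (Q y)
      · rw [show W y = ∫ z, V z ∂Q y from rfl,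
          ofReal_integral_eq_lintegral_ofReal hy (Eventually.of_forall hV0)]
      · rw [show W y = ∫ z, V z ∂Q y from rfl, integral_undef hy]
        simp
    have hWint : Integrable W π := by
      refine ⟨hWm.aestronglyMeasurable, ?_⟩
      show ∫⁻ y, (‖W y‖₊ : ℝ≥0∞) ∂π < ⊤
      calc ∫⁻ y, (‖W y‖₊ : ℝ≥0∞) ∂π = ∫⁻ y, ENNReal.ofReal (W y) ∂π :=
            lintegral_congr fun y => Real.enorm_eq_ofReal (hW0 y)
        _ ≤ ∫⁻ y, (∫⁻ z, ENNReal.ofReal (V z) ∂Q y) ∂π := lintegral_mono hWofReal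
        _ = ∫⁻ z, ENNReal.ofReal (V z) ∂π := hlQ
        _ < ⊤ := hπVfin
    have hWle : ∫ y, W y ∂π ≤ ∫ x, V x ∂π := by
      rw [integral_eq_lintegral_of_nonneg_ae (Eventually.of_forall hW0)
          hWm.aestronglyMeasurable,
        integral_eq_lintegral_of_nonneg_ae (Eventually.of_forall hV0)
          hVm.aestronglyMeasurable]
      refine ENNReal.toReal_mono hπVfin.ne ?_
      calc ∫⁻ y, ENNReal.ofReal (W y) ∂π
          ≤ ∫⁻ y, (∫⁻ z, ENNReal.ofReal (V z) ∂Q y) ∂π := lintegral_mono hWofReal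
        _ = ∫⁻ z, ENNReal.ofReal (V z) ∂π := hlQ
    have hGbound : ∀ w, |G w| ≤ (D + |μf|) * V w := by
      intro w
      calc |G w| = |(G w - μf) + μf| := by ring_nf
        _ ≤ |G w - μf| + |μf| := abs_add_le _ _
        _ ≤ D * Real.sqrt (V w) + |μf| * 1 := by
            rw [mul_one]; exact add_le_add (hbnd w) le_rfl
        _ ≤ D * V w + |μf| * V w :=
            add_le_add (mul_le_mul_of_nonneg_left (hsV w) hD)
              (mul_le_mul_of_nonneg_left (hV1 w) (abs_nonneg _))
        _ = (D + |μf|) * V w := by ring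
    set I : X → ℝ := fun y => ∫ w, G w ∂Q y with hIdef
    have hIm : Measurable I := meas_kernel_integral hGm
    have hinner : ∀ᵐ y ∂π, |I y - μf| ≤ D * Real.sqrt (W y) := by
      filter_upwards [hQae] with y hy
      have hGint_y : Integrable G (Q y) := by
        refine Integrable.mono' (hy.const_mul (D + |μf|)) hGm.aestronglyMeasurable
          (Eventually.of_forall fun w => ?_)
        rw [Real.norm_eq_abs]; exact hGbound w
      have hIsub : I y - μf = ∫ w, (G w - μf) ∂Q y := by
        rw [show I y = ∫ w, G w ∂Q y from rfl,
          integral_sub hGint_y (integrable_const μf), integral_const]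
        simp
      rw [hIsub]
      have hsub_int : Integrable (fun w => G w - μf) (Q y) :=
        hGint_y.sub (integrable_const μf)
      have hdomy : Integrable (fun w => D * Real.sqrt (V w)) (Q y) := by
        refine Integrable.mono' (hy.const_mul D)
          (measurable_const.mul hVm.sqrt).aestronglyMeasurable
          (Eventually.of_forall fun w => ?_)
        rw [Real.norm_eq_abs, abs_of_nonneg (by positivity)]
        exact mul_le_mul_of_nonneg_left (hsV w) hD
      have hcs := cs_integral (Q y) (u := fun w => Real.sqrt (V w)) (v := fun _ => (1:ℝ))
        hVm.sqrt.aestronglyMeasurable aestronglyMeasurable_const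
        (Eventually.of_forall fun w => Real.sqrt_nonneg _)
        (Eventually.of_forall fun _ => zero_le_one)
        (hy.congr (Eventually.of_forall fun w => (Real.sq_sqrt (hV0 w)).symm))
        (by simpa using (integrable_const (1:ℝ) : Integrable (fun _ : X => (1:ℝ)) (Q y)))
      simp only [mul_one, one_pow] at hcs
      rw [integral_const] at hcs
      simp only [measure_univ, probReal_univ, ENNReal.toReal_one, smul_eq_mul, one_mul, Real.sqrt_one,
        mul_one] at hcs
      have eW : ∫ w, (Real.sqrt (V w))^2 ∂Q y = W y := by
        rw [show W y = ∫ z, V z ∂Q y from rfl]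
        exact integral_congr_ae (Eventually.of_forall fun w => Real.sq_sqrt (hV0 w))
      rw [eW] at hcs
      calc |∫ w, (G w - μf) ∂Q y| ≤ ∫ w, ‖G w - μf‖ ∂Q y := by
            rw [← Real.norm_eq_abs]; exact norm_integral_le_integral_norm _
        _ ≤ ∫ w, D * Real.sqrt (V w) ∂Q y := by
            refine integral_mono hsub_int.norm hdomy fun w => ?_
            rw [Real.norm_eq_abs]; exact hbnd w
        _ = D * ∫ w, Real.sqrt (V w) ∂Q y := integral_const_mul _ _
        _ ≤ D * Real.sqrt (W y) := mul_le_mul_of_nonneg_left hcs hD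
    have hdom2 : Integrable (fun y => c1 * D * (Real.sqrt (V y) * Real.sqrt (W y))) π := by
      have h4 : Integrable (fun y => Real.sqrt (V y) * Real.sqrt (W y)) π := by
        refine Integrable.mono' ((hπV.add hWint).const_mul (1/2))
          (hVm.sqrt.mul hWm.sqrt).aestronglyMeasurable
          (Eventually.of_forall fun y => ?_)
        rw [Real.norm_eq_abs, abs_of_nonneg (by positivity)]
        simp only [Pi.add_apply]
        have e1 := Real.sq_sqrt (hV0 y)
        have e2 := Real.sq_sqrt (hW0 y)
        nlinarith [sq_nonneg (Real.sqrt (V y) - Real.sqrt (W y))]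
      exact h4.const_mul _
    have hptw2 : ∀ᵐ y ∂π, ‖f y * (I y - μf)‖
        ≤ c1 * D * (Real.sqrt (V y) * Real.sqrt (W y)) := by
      filter_upwards [hinner] with y hy
      rw [Real.norm_eq_abs, abs_mul]
      calc |f y| * |I y - μf| ≤ (c1 * Real.sqrt (V y)) * (D * Real.sqrt (W y)) :=
            mul_le_mul (hf y) hy (abs_nonneg _) (by positivity)
        _ = c1 * D * (Real.sqrt (V y) * Real.sqrt (W y)) := by ring
    have hfI_int : Integrable (fun y => f y * (I y - μf)) π :=
      Integrable.mono' hdom2 (hfm.mul (hIm.sub measurable_const)).aestronglyMeasurable hptw2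
    have hsplit : ∫ y, f y * I y ∂π = (∫ y, f y * (I y - μf) ∂π) + μf * μf := by
      have e : (fun y => f y * I y) = fun y => f y * (I y - μf) + μf * f y := by
        funext y; ring
      rw [e, integral_add hfI_int (hfπ.const_mul μf), integral_const_mul]
    have hgoal : (∫ y, f y * (∫ w, G w ∂Q y) ∂π) = ∫ y, f y * I y ∂π := rfl
    rw [hgoal, hsplit, show (∫ y, f y * (I y - μf) ∂π) + μf * μf - μf^2
        = ∫ y, f y * (I y - μf) ∂π by ring]
    have houter : ∫ y, Real.sqrt (V y) * Real.sqrt (W y) ∂π ≤ ∫ x, V x ∂π := by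
      have hcs2 := cs_integral π (u := fun y => Real.sqrt (V y)) (v := fun y => Real.sqrt (W y))
        hVm.sqrt.aestronglyMeasurable hWm.sqrt.aestronglyMeasurable
        (Eventually.of_forall fun y => Real.sqrt_nonneg _)
        (Eventually.of_forall fun y => Real.sqrt_nonneg _)
        (hπV.congr (Eventually.of_forall fun y => (Real.sq_sqrt (hV0 y)).symm))
        (hWint.congr (Eventually.of_forall fun y => (Real.sq_sqrt (hW0 y)).symm))
      have eV : ∫ y, (Real.sqrt (V y))^2 ∂π = ∫ x, V x ∂π :=
        integral_congr_ae (Eventually.of_forall fun y => Real.sq_sqrt (hV0 y))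
      have eW2 : ∫ y, (Real.sqrt (W y))^2 ∂π = ∫ y, W y ∂π :=
        integral_congr_ae (Eventually.of_forall fun y => Real.sq_sqrt (hW0 y))
      rw [eV, eW2] at hcs2
      calc ∫ y, Real.sqrt (V y) * Real.sqrt (W y) ∂π
          ≤ Real.sqrt (∫ x, V x ∂π) * Real.sqrt (∫ y, W y ∂π) := hcs2
        _ ≤ Real.sqrt (∫ x, V x ∂π) * Real.sqrt (∫ x, V x ∂π) :=
            mul_le_mul_of_nonneg_left (Real.sqrt_le_sqrt hWle) (Real.sqrt_nonneg _)
        _ = ∫ x, V x ∂π := Real.mul_self_sqrt (integral_nonneg hV0)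
    calc |∫ y, f y * (I y - μf) ∂π| ≤ ∫ y, ‖f y * (I y - μf)‖ ∂π := by
          rw [← Real.norm_eq_abs]; exact norm_integral_le_integral_norm _
      _ ≤ ∫ y, c1 * D * (Real.sqrt (V y) * Real.sqrt (W y)) ∂π :=
          integral_mono_ae hfI_int.norm hdom2 hptw2
      _ = c1 * D * ∫ y, Real.sqrt (V y) * Real.sqrt (W y) ∂π := integral_const_mul _ _
      _ ≤ c1 * D * ∫ x, V x ∂π :=
          mul_le_mul_of_nonneg_left houter (by positivity)
  -- the four covariance bounds
  set D1 : ℝ := max c1 1 * Real.sqrt (2 * C) with hD1def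
  set D2 : ℝ := max c2 1 * Real.sqrt (2 * C) with hD2def
  have hD1' : 0 ≤ D1 := by
    rw [hD1def]
    exact mul_nonneg (le_trans zero_le_one (le_max_right _ _)) (Real.sqrt_nonneg _)
  have hD2' : 0 ≤ D2 := by
    rw [hD2def]
    exact mul_nonneg (le_trans zero_le_one (le_max_right _ _)) (Real.sqrt_nonneg _)
  have hπVpos : 0 ≤ ∫ x, V x ∂π := integral_nonneg hV0
  have hkeyf : ∀ (n : ℕ) (x : X),
      |(∫ z, f z ∂(itk P Q n x)) - ∫ x, f x ∂π| ≤ D1 * t ^ n * Real.sqrt (V x) :=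
    fun n x => key f hfm c1 hc1 hf n x
  have hkeyPf : ∀ (n : ℕ) (x : X),
      |(∫ z, Pf z ∂(itk P Q n x)) - ∫ x, f x ∂π| ≤ D2 * t ^ n * Real.sqrt (V x) := by
    intro n x
    rw [← hπPf]
    exact key Pf hPfm c2 hc2 hPf n x
  have hcov : ∀ k, |covA π P Q f 0 (k+1)| + |covA π P Q f 1 (k+1)|
      ≤ (c1 * (D1 + D2) * ∫ x, V x ∂π) * t ^ (k/2) := by
    intro k
    rcases Nat.even_or_odd k with he | ho
    · obtain ⟨n, hn⟩ := he
      have hk : k = 2*n := by omega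
      have hkd : k/2 = n := by omega
      have h0 : |covA π P Q f 0 (k+1)| ≤ c1 * (D2 * t^n) * ∫ x, V x ∂π := by
        unfold covA
        rw [hk]
        simp only [hGb n]
        exact caseA _ (meas_kernel_integral hPfm) (D2 * t^n)
          (by positivity) (fun x => hkeyPf n x)
      have h1 : |covA π P Q f 1 (k+1)| ≤ c1 * (D1 * t^n) * ∫ x, V x ∂π := by
        unfold covA
        rw [hk]
        simp only [hform_odd, hGa n]
        exact caseB _ (meas_kernel_integral hfm) (D1 * t^n)
          (by positivity) (fun x => hkeyf n x)
      calc |covA π P Q f 0 (k+1)| + |covA π P Q f 1 (k+1)|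
          ≤ c1 * (D2 * t^n) * (∫ x, V x ∂π) + c1 * (D1 * t^n) * ∫ x, V x ∂π :=
            add_le_add h0 h1
        _ = (c1 * (D1 + D2) * ∫ x, V x ∂π) * t ^ n := by ring
        _ = (c1 * (D1 + D2) * ∫ x, V x ∂π) * t ^ (k/2) := by rw [hkd]
    · obtain ⟨n, hn⟩ := ho
      have hkd : k/2 = n := by omega
      have h0 : |covA π P Q f 0 (k+1)| ≤ c1 * (D1 * t^n) * ∫ x, V x ∂π := by
        unfold covA
        rw [show k+1 = 2*(n+1) by omega]
        simp only [hGa (n+1)]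
        have hb1 := caseA _ (meas_kernel_integral hfm) (D1 * t^(n+1))
          (by positivity) (fun x => hkeyf (n+1) x)
        refine le_trans hb1 ?_
        have : t^(n+1) ≤ t^n := pow_le_pow_of_le_one ht0.le ht1.le (by omega)
        have h5 : c1 * (D1 * t^(n+1)) ≤ c1 * (D1 * t^n) :=
          mul_le_mul_of_nonneg_left (mul_le_mul_of_nonneg_left this hD1') hc1
        exact mul_le_mul_of_nonneg_right h5 hπVpos
      have h1 : |covA π P Q f 1 (k+1)| ≤ c1 * (D2 * t^n) * ∫ x, V x ∂π := by
        unfold covA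
        rw [show k+1 = (2*n+1)+1 by omega]
        simp only [hform_odd, hGb n]
        exact caseB _ (meas_kernel_integral hPfm) (D2 * t^n)
          (by positivity) (fun x => hkeyPf n x)
      calc |covA π P Q f 0 (k+1)| + |covA π P Q f 1 (k+1)|
          ≤ c1 * (D1 * t^n) * (∫ x, V x ∂π) + c1 * (D2 * t^n) * ∫ x, V x ∂π :=
            add_le_add h0 h1
        _ = (c1 * (D1 + D2) * ∫ x, V x ∂π) * t ^ n := by ring
        _ = (c1 * (D1 + D2) * ∫ x, V x ∂π) * t ^ (k/2) := by rw [hkd]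
  -- summability via geometric comparison
  set M : ℝ := c1 * (D1 + D2) * ∫ x, V x ∂π with hMdef
  have hM0 : 0 ≤ M := by
    rw [hMdef]
    exact mul_nonneg (mul_nonneg hc1 (add_nonneg hD1' hD2')) hπVpos
  set s : ℝ := Real.sqrt t with hsdef
  have hs0 : 0 < s := Real.sqrt_pos.mpr ht0
  have hs1 : s < 1 := by
    rw [hsdef, show (1:ℝ) = Real.sqrt 1 by simp]
    exact Real.sqrt_lt_sqrt ht0.le ht1
  have hs_sq : s^2 = t := Real.sq_sqrt ht0.le
  have hcomp : ∀ k, M * t^(k/2) ≤ (M * s⁻¹) * s^k := by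
    intro k
    have h1 : ∀ j, t^j = s^(2*j) := fun j => by rw [pow_mul, hs_sq]
    cases k with
    | zero =>
      simp only [Nat.zero_div, pow_zero, mul_one]
      have : (1:ℝ) ≤ s⁻¹ := (one_le_inv₀ hs0).mpr hs1.le
      nlinarith
    | succ k =>
      have h2 : s^(2*((k+1)/2)) ≤ s^k := pow_le_pow_of_le_one hs0.le hs1.le (by omega)
      have h3 : s^k = s⁻¹ * s^(k+1) := by
        rw [pow_succ]; field_simp
      calc M * t^((k+1)/2) = M * s^(2*((k+1)/2)) := by rw [h1]
        _ ≤ M * s^k := mul_le_mul_of_nonneg_left h2 hM0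
        _ = (M * s⁻¹) * s^(k+1) := by rw [h3]; ring
  refine Summable.of_nonneg_of_le (fun k => add_nonneg (abs_nonneg _) (abs_nonneg _))
    (fun k => le_trans (hcov k) (hcomp k)) ?_
  exact (summable_geometric_of_lt_one hs0.le hs1).mul_left _
end

section
/- Metropolis–Hastings reversibility via Radon–Nikodym derivative: let K be a Markov kernel on (X, 𝒳) and π a probability measure. Define μ(dx×dx') = π(dx)K(x,dx') and ν(dx×dx') = π(dx')K(x',dx), and assume μ and ν are equivalent measures with 0 < (dν/dμ)(x,x') < ∞ μ-a.s. Then the kernel P(x, dx') = K(x,dx')α(x,x') + δ_x(dx')β(x), where α(x,x') = 1 ∧ (dν/dμ)(x,x') and β(x) = 1 − ∫K(x,dx')α(x,x'), is a π-reversible Markov kernel. -/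
open MeasureTheory ProbabilityTheory
open scoped ENNReal

/-- Metropolis–Hastings reversibility (Proposition 8): with `μ(dx dx') = π(dx)K(x,dx')`,
`ν(dx dx') = π(dx')K(x',dx)` equivalent and `0 < dν/dμ < ∞` `μ`-a.e., the kernel
`P(x, dx') = K(x, dx') α(x,x') + δ_x(dx') β(x)` with `α = 1 ∧ dν/dμ` is a Markov kernel
satisfying detailed balance with respect to `π`. -/
theorem stmt11 {X : Type*} [MeasurableSpace X]
    (π : Measure X) [IsProbabilityMeasure π]
    (K : Kernel X X) [IsMarkovKernel K]
    (μ ν : Measure (X × X))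
    (hμ : μ = π.compProd K)
    (hν : ν = (π.compProd K).map Prod.swap)
    (hac : μ ≪ ν) (hac' : ν ≪ μ)
    (hpos : ∀ᵐ p ∂μ, 0 < ν.rnDeriv μ p ∧ ν.rnDeriv μ p < ⊤)
    (α : X → X → ℝ≥0∞)
    (hα : ∀ x x', α x x' = min 1 (ν.rnDeriv μ (x, x')))
    (P : X → Measure X)
    (hP : ∀ x, P x = (K x).withDensity (fun x' => α x x')
      + ((1 : ℝ≥0∞) - ∫⁻ x', α x x' ∂(K x)) • Measure.dirac x) :
    (∀ x, P x Set.univ = 1) ∧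
      ∀ A B : Set X, MeasurableSet A → MeasurableSet B →
        ∫⁻ x in A, P x B ∂π = ∫⁻ x in B, P x A ∂π := by
  have hswap : Measurable (Prod.swap : X × X → X × X) := measurable_swap
  have hνμ : ν = μ.map Prod.swap := by rw [hν, hμ]
  have hμν : ν.map Prod.swap = μ := by
    rw [hνμ, Measure.map_map hswap hswap]
    have : (Prod.swap ∘ Prod.swap : X × X → X × X) = id := by
      funext p; simp
    rw [this, Measure.map_id]
  have hμprob : IsProbabilityMeasure μ := by rw [hμ]; infer_instance
  have hνprob : IsProbabilityMeasure ν := by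
    rw [hνμ]; exact Measure.isProbabilityMeasure_map hswap.aemeasurable
  set r : X × X → ℝ≥0∞ := ν.rnDeriv μ with hr_def
  have hr : Measurable r := Measure.measurable_rnDeriv ν μ
  set f : X × X → ℝ≥0∞ := fun p => min 1 (r p) with hf_def
  have hf : Measurable f := measurable_const.min hr
  have hνd : μ.withDensity r = ν := Measure.withDensity_rnDeriv_eq ν μ hac'
  -- μ = ν.withDensity (r ∘ swap)
  have hμd : ν.withDensity (fun q => r (Prod.swap q)) = μ := by
    ext s hs
    have hm : Measurable fun a : X × X => r (Prod.swap a) := hr.comp hswap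
    rw [withDensity_apply _ hs, ← lintegral_indicator hs, hνμ,
      lintegral_map (hm.indicator hs) hswap]
    have : (fun q => s.indicator (fun q => r (Prod.swap q)) (Prod.swap q))
        = (Prod.swap ⁻¹' s).indicator r := by
      funext q
      by_cases h : Prod.swap q ∈ s <;>
        simp [Set.indicator, h, Set.mem_preimage]
    rw [this, lintegral_indicator (hswap hs), Measure.setLIntegral_rnDeriv hac',
      ← hμν, Measure.map_apply hswap hs]
  -- a.e. identity : r (swap q) * r q = 1 → f (swap q) * r q = f q
  have hswap_rn : (fun q => r (Prod.swap q)) =ᵐ[μ] μ.rnDeriv ν := by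
    have h1 : (fun q => r (Prod.swap q)) =ᵐ[ν] μ.rnDeriv ν := by
      conv_rhs => rw [← hμd]
      exact (Measure.rnDeriv_withDensity ν (hr.comp hswap)).symm
    exact hac.ae_le h1
  have hmul : (fun q => μ.rnDeriv ν q * r q) =ᵐ[μ] fun _ => 1 :=
    (Measure.rnDeriv_mul_rnDeriv hac).trans (Measure.rnDeriv_self μ)
  have hkey_ae : (fun q => f (Prod.swap q) * r q) =ᵐ[μ] f := by
    filter_upwards [hswap_rn, hmul, hpos] with q h1 h2 h3
    have hrq0 : r q ≠ 0 := h3.1.ne'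
    have hrqtop : r q ≠ ⊤ := h3.2.ne
    have hs1 : r (Prod.swap q) * r q = 1 := by rw [h1]; exact h2
    have hsval : r (Prod.swap q) = (r q)⁻¹ :=
      ENNReal.eq_inv_of_mul_eq_one_left hs1
    simp only [hf_def]
    rcases le_total (r q) 1 with h | h
    · have : (1 : ℝ≥0∞) ≤ r (Prod.swap q) := by
        rw [hsval]; exact ENNReal.one_le_inv.2 h
      rw [min_eq_left this, min_eq_right h, one_mul]
    · have : r (Prod.swap q) ≤ 1 := by
        rw [hsval]; exact ENNReal.inv_le_one.2 h
      rw [min_eq_right this, hsval, ENNReal.inv_mul_cancel hrq0 hrqtop,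
        min_eq_left h]
  -- main symmetry
  have key : ∀ A B : Set X, MeasurableSet A → MeasurableSet B →
      ∫⁻ p in A ×ˢ B, f p ∂μ = ∫⁻ p in B ×ˢ A, f p ∂μ := by
    intro A B hA hB
    have hBA : MeasurableSet (B ×ˢ A) := hB.prod hA
    have hAB : MeasurableSet (A ×ˢ B) := hA.prod hB
    have hfs : Measurable fun q : X × X => f (Prod.swap q) := hf.comp hswap
    calc ∫⁻ p in A ×ˢ B, f p ∂μ
        = ∫⁻ p, (A ×ˢ B).indicator f p ∂μ := (lintegral_indicator hAB f).symm
      _ = ∫⁻ p, (A ×ˢ B).indicator f p ∂(ν.map Prod.swap) := by rw [hμν]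
      _ = ∫⁻ q, (A ×ˢ B).indicator f (Prod.swap q) ∂ν :=
          lintegral_map (hf.indicator hAB) hswap
      _ = ∫⁻ q in B ×ˢ A, f (Prod.swap q) ∂ν := by
          have : (fun q => (A ×ˢ B).indicator f (Prod.swap q))
              = (B ×ˢ A).indicator (fun q => f (Prod.swap q)) := by
            funext q
            by_cases h : Prod.swap q ∈ A ×ˢ B
            · have h' : q ∈ B ×ˢ A := ⟨h.2, h.1⟩
              simp [Set.indicator, h, h']
            · have h' : q ∉ B ×ˢ A := fun hq => h ⟨hq.2, hq.1⟩
              simp [Set.indicator, h, h']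
          rw [this, lintegral_indicator hBA]
      _ = ∫⁻ q in B ×ˢ A, f (Prod.swap q) ∂(μ.withDensity r) := by rw [hνd]
      _ = ∫⁻ q in B ×ˢ A, (r * fun q => f (Prod.swap q)) q ∂μ :=
          setLIntegral_withDensity_eq_setLIntegral_mul μ hr hfs hBA
      _ = ∫⁻ q in B ×ˢ A, f q ∂μ := by
          refine lintegral_congr_ae (ae_restrict_of_ae ?_)
          filter_upwards [hkey_ae] with q hq
          simpa [mul_comm] using hq
  -- bound on acceptance integral
  set c : X → ℝ≥0∞ := fun x => ∫⁻ x', α x x' ∂(K x) with hc_def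
  have hαf : ∀ x x', α x x' = f (x, x') := fun x x' => hα x x'
  have hc1 : ∀ x, c x ≤ 1 := by
    intro x
    calc c x ≤ ∫⁻ _, 1 ∂(K x) := lintegral_mono fun x' => by
          rw [hα]; exact min_le_left _ _
      _ = 1 := by simp
  constructor
  · intro x
    rw [hP x, Measure.add_apply, Measure.smul_apply, smul_eq_mul,
      withDensity_apply _ MeasurableSet.univ, setLIntegral_univ, measure_univ, mul_one]
    exact add_tsub_cancel_of_le (hc1 x)
  · intro A B hA hB
    have expand : ∀ (A B : Set X), MeasurableSet A → MeasurableSet B →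
        ∫⁻ x in A, P x B ∂π
          = ∫⁻ p in A ×ˢ B, f p ∂μ + ∫⁻ x in A ∩ B, (1 - c x) ∂π := by
      intro A B hA hB
      have h1 : ∀ x, P x B = (∫⁻ x' in B, f (x, x') ∂(K x))
          + (1 - c x) * B.indicator 1 x := by
        intro x
        rw [hP x, Measure.add_apply, Measure.smul_apply, smul_eq_mul,
          withDensity_apply _ hB, Measure.dirac_apply' x hB]
        congr 1
        exact lintegral_congr fun x' => hαf x x'
      simp only [h1]
      have hmeas1 : Measurable fun x => ∫⁻ x' in B, f (x, x') ∂(K x) := by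
        have : Measurable fun p : X × X => B.indicator (fun x' => f (p.1, x')) p.2 := by
          have : (fun p : X × X => B.indicator (fun x' => f (p.1, x')) p.2)
              = {p : X × X | p.2 ∈ B}.indicator f := by
            funext p
            by_cases h : p.2 ∈ B <;> simp [Set.indicator, h]
          rw [this]
          exact hf.indicator (measurable_snd hB)
        have h := Measurable.lintegral_kernel_prod_right
          (κ := K) (f := fun x x' => B.indicator (fun y => f (x, y)) x') this
        have heq : (fun x => ∫⁻ x' in B, f (x, x') ∂(K x))
            = fun x => ∫⁻ x', B.indicator (fun y => f (x, y)) x' ∂(K x) := by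
          funext x; rw [lintegral_indicator hB]
        rw [heq]; exact h
      rw [lintegral_add_left hmeas1]
      congr 1
      · rw [hμ, Measure.setLIntegral_compProd hf hA hB]
      · have : ∀ x, (1 - c x) * B.indicator 1 x = B.indicator (fun x => 1 - c x) x := by
          intro x
          by_cases h : x ∈ B <;> simp [Set.indicator, h]
        simp only [this]
        rw [← lintegral_indicator hA, ← lintegral_indicator (hA.inter hB)]
        congr 1
        funext x
        by_cases h1 : x ∈ A <;> by_cases h2 : x ∈ B <;>
          simp [Set.indicator, h1, h2]
    rw [expand A B hA hB, expand B A hB hA, key A B hA hB, Set.inter_comm]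
end

section
/- For the reversed-measure construction of the Metropolis–Hastings acceptance ratio: with μ, ν as above (μ(dx×dx') = π(dx)K(x,dx'), ν(dx×dx') = π(dx')K(x',dx)) and s : X×X → ℝ the swap map s(x,x') = (x',x), it holds that ν = s_*μ (the pushforward of μ under the swap), and consequently (dν/dμ)(x,x') · (dν/dμ)(x',x) = 1 for μ-a.e. (x,x') when μ and ν are equivalent. -/
open MeasureTheory ProbabilityTheory
open scoped ENNReal

/-- The reversed measure `ν(dx dx') = π(dx')K(x',dx)` is the pushforward of
`μ(dx dx') = π(dx)K(x,dx')` under the coordinate swap; consequently, when `μ` and `ν`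
are equivalent, `(dν/dμ)(x,x') ⬝ (dν/dμ)(x',x) = 1` for `μ`-a.e. `(x,x')`. -/
theorem stmt12 {X : Type*} [MeasurableSpace X]
    (π : Measure X) [IsProbabilityMeasure π]
    (K : Kernel X X) [IsMarkovKernel K]
    (μ ν : Measure (X × X)) [IsFiniteMeasure ν]
    (hμ : μ = π.compProd K)
    (hν : ∀ A B : Set X, MeasurableSet A → MeasurableSet B →
      ν (A ×ˢ B) = ∫⁻ x' in B, K x' A ∂π)
    (hac : μ ≪ ν) (hac' : ν ≪ μ) :
    ν = μ.map Prod.swap ∧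
      ∀ᵐ p ∂μ, ν.rnDeriv μ p * ν.rnDeriv μ p.swap = 1 := by
  have hμprob : IsProbabilityMeasure μ := by rw [hμ]; infer_instance
  have key : ν = μ.map Prod.swap := by
    refine MeasureTheory.ext_of_generate_finite
      (Set.image2 (· ×ˢ ·) {s : Set X | MeasurableSet s} {t : Set X | MeasurableSet t})
      generateFrom_prod.symm isPiSystem_prod ?_ ?_
    · rintro s ⟨A, hA, B, hB, rfl⟩
      rw [hν A B hA hB, Measure.map_apply measurable_swap (hA.prod hB)]
      have : Prod.swap ⁻¹' (A ×ˢ B) = B ×ˢ A := by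
        ext p; simp [and_comm]
      rw [this, hμ, Measure.compProd_apply_prod hB hA]
    · have h1 : ν Set.univ = 1 := by
        rw [← Set.univ_prod_univ, hν _ _ MeasurableSet.univ MeasurableSet.univ]
        simp
      have h2 : (μ.map Prod.swap) Set.univ = 1 := by
        rw [Measure.map_apply measurable_swap MeasurableSet.univ]
        simp
      rw [h1, h2]
  refine ⟨key, ?_⟩
  have hswap : μ = ν.map Prod.swap := by
    rw [key, Measure.map_map measurable_swap measurable_swap]
    simp [Prod.swap_swap_eq]
  -- rnDeriv under the measurable equivalence swap
  have he : MeasurableEmbedding (Prod.swap : X × X → X × X) :=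
    (MeasurableEquiv.prodComm : X × X ≃ᵐ X × X).measurableEmbedding
  have h1 : (fun p => (μ.map Prod.swap).rnDeriv (ν.map Prod.swap) (Prod.swap p))
      =ᵐ[ν] μ.rnDeriv ν := he.rnDeriv_map μ ν
  rw [← key, ← hswap] at h1
  have h1μ : (fun p => ν.rnDeriv μ (Prod.swap p)) =ᵐ[μ] μ.rnDeriv ν := hac h1
  have h2 : ν.rnDeriv μ * μ.rnDeriv ν =ᵐ[μ] ν.rnDeriv ν :=
    hac (Measure.rnDeriv_mul_rnDeriv hac')
  have h3 : ν.rnDeriv ν =ᵐ[μ] 1 := hac (Measure.rnDeriv_self ν)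
  filter_upwards [h1μ, h2, h3] with p hp h2p h3p
  simp only [Pi.mul_apply, Pi.one_apply] at h2p h3p
  rw [Prod.swap] at hp
  calc ν.rnDeriv μ p * ν.rnDeriv μ p.swap
      = ν.rnDeriv μ p * μ.rnDeriv ν p := by rw [← hp]; rfl
    _ = 1 := by rw [h2p, h3p]
end

section
/- Reversibility of the marginal chain of the systematic refreshment algorithm: let π(dy×du) = π*(dy)R(y,du) and suppose the kernel on Y×U mapping (y,u) to (ŷ,û) drawn from S(y,u;dŷ)T(y,u,ŷ;dû) and accepted with probability α(y,u,ŷ,û) is π-reversible. Then the kernel K on Y defined by K(y, dy') = β(y)δ_y(dy') + ∫∫ R(y,du)S(y,u;dy')T(y,u,y';du')α(y,u,y',u'), with β the complementary rejection probability, is π*-reversible. -/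
open MeasureTheory ProbabilityTheory
open scoped ENNReal

/-- Reversibility of the marginal chain of the systematic refreshment algorithm
(Proposition 13): if the auxiliary-variable acceptance dynamics, with target
`π(dy du) = π*(dy)R(y,du)`, proposal kernels `S`, `T` and acceptance probability `α`,
satisfies detailed balance with respect to `π`, then the marginal kernel
`K(y, dy') = β(y)δ_y(dy') + ∫∫ R(y,du)S(y,u;dy')T(y,u,y';du')α(y,u,y',u')`
satisfies detailed balance with respect to `π*`. -/
theorem stmt18 {Y U : Type*} [MeasurableSpace Y] [MeasurableSpace U]
    (πstar : Measure Y) [IsProbabilityMeasure πstar]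
    (R : Kernel Y U) [IsMarkovKernel R]
    (S : Y → U → Measure Y) (T : Y → U → Y → Measure U)
    (hS : ∀ y u, IsProbabilityMeasure (S y u))
    (hT : ∀ y u y', IsProbabilityMeasure (T y u y'))
    (α : Y → U → Y → U → ℝ≥0∞) (hα1 : ∀ y u y' u', α y u y' u' ≤ 1)
    (hmeas : ∀ B : Set Y, MeasurableSet B →
      Measurable (fun p : Y × U =>
        ∫⁻ y', B.indicator (fun y' => ∫⁻ u', α p.1 p.2 y' u' ∂(T p.1 p.2 y')) y'
          ∂(S p.1 p.2)))
    (hrev : ∀ f g : Y × U → ℝ≥0∞, Measurable f → Measurable g →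
      (∫⁻ p, f p * ∫⁻ y', (∫⁻ u', g (y', u') * α p.1 p.2 y' u' ∂(T p.1 p.2 y'))
          ∂(S p.1 p.2) ∂(πstar.compProd R))
        = ∫⁻ p, g p * ∫⁻ y', (∫⁻ u', f (y', u') * α p.1 p.2 y' u' ∂(T p.1 p.2 y'))
          ∂(S p.1 p.2) ∂(πstar.compProd R))
    (accept : Y → Set Y → ℝ≥0∞)
    (haccept : ∀ y B, accept y B =
      ∫⁻ u, ∫⁻ y', B.indicator (fun y' => ∫⁻ u', α y u y' u' ∂(T y u y')) y'
        ∂(S y u) ∂(R y)) :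
    ∀ A B : Set Y, MeasurableSet A → MeasurableSet B →
      ∫⁻ y in A, (accept y B + B.indicator (fun _ => 1 - accept y Set.univ) y) ∂πstar
        = ∫⁻ y in B, (accept y A + A.indicator (fun _ => 1 - accept y Set.univ) y) ∂πstar := by
  -- measurability of y ↦ accept y C
  have hacc_meas : ∀ C : Set Y, MeasurableSet C → Measurable (fun y => accept y C) := by
    intro C hC
    have : Measurable (fun y => ∫⁻ u,
        (fun p : Y × U => ∫⁻ y', C.indicator
          (fun y' => ∫⁻ u', α p.1 p.2 y' u' ∂(T p.1 p.2 y')) y' ∂(S p.1 p.2)) (y, u) ∂(R y)) :=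
      Measurable.lintegral_kernel_prod_right (hmeas C hC)
    simpa [haccept] using this
  -- key symmetry for the absolutely continuous part
  have key : ∀ A B : Set Y, MeasurableSet A → MeasurableSet B →
      ∫⁻ y in A, accept y B ∂πstar = ∫⁻ y in B, accept y A ∂πstar := by
    intro A B hA hB
    have hfA : Measurable (fun p : Y × U => A.indicator (fun _ => (1 : ℝ≥0∞)) p.1) :=
      (measurable_const.indicator hA).comp measurable_fst
    have hfB : Measurable (fun p : Y × U => B.indicator (fun _ => (1 : ℝ≥0∞)) p.1) :=
      (measurable_const.indicator hB).comp measurable_fst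
    have h := hrev _ _ hfA hfB
    -- rewrite inner integrals into indicator form
    have hinner : ∀ (C : Set Y) (y : Y) (u : U) (y' : Y),
        (∫⁻ u', C.indicator (fun _ => (1 : ℝ≥0∞)) y' * α y u y' u' ∂(T y u y'))
          = C.indicator (fun y' => ∫⁻ u', α y u y' u' ∂(T y u y')) y' := by
      intro C y u y'
      by_cases hy : y' ∈ C <;> simp [hy, lintegral_const_mul' _ _ (by simp : (0:ℝ≥0∞) ≠ ⊤)]
    simp only [hinner] at h
    -- reduce each compProd integral to a set integral over πstar
    have hred : ∀ (A B : Set Y), MeasurableSet A → MeasurableSet B →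
        (∫⁻ p, A.indicator (fun _ => (1 : ℝ≥0∞)) p.1 *
          ∫⁻ y', B.indicator (fun y' => ∫⁻ u', α p.1 p.2 y' u' ∂(T p.1 p.2 y')) y'
            ∂(S p.1 p.2) ∂(πstar.compProd R))
          = ∫⁻ y in A, accept y B ∂πstar := by
      intro A B hA hB
      have hm : Measurable fun p : Y × U => A.indicator (fun _ => (1 : ℝ≥0∞)) p.1 *
          ∫⁻ y', B.indicator (fun y' => ∫⁻ u', α p.1 p.2 y' u' ∂(T p.1 p.2 y')) y'
            ∂(S p.1 p.2) :=
        Measurable.mul ((measurable_const.indicator hA).comp measurable_fst) (hmeas B hB)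
      rw [Measure.lintegral_compProd hm]
      have : ∀ y : Y, (∫⁻ u, A.indicator (fun _ => (1 : ℝ≥0∞)) y *
          ∫⁻ y', B.indicator (fun y' => ∫⁻ u', α y u y' u' ∂(T y u y')) y'
            ∂(S y u) ∂(R y)) = A.indicator (fun y => accept y B) y := by
        intro y
        by_cases hy : y ∈ A <;> simp [hy, haccept]
      simp only [this]
      exact lintegral_indicator hA _
    rw [hred A B hA hB, hred B A hB hA] at h
    exact h
  intro A B hA hB
  have hmA : Measurable fun y => accept y A := hacc_meas A hA
  have hmB : Measurable fun y => accept y B := hacc_meas B hB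
  rw [lintegral_add_left hmB, lintegral_add_left hmA]
  have hdiag : ∀ (A B : Set Y), MeasurableSet A → MeasurableSet B →
      (∫⁻ y in A, B.indicator (fun _ => 1 - accept y Set.univ) y ∂πstar)
        = ∫⁻ y, (A ∩ B).indicator (fun y => 1 - accept y Set.univ) y ∂πstar := by
    intro A B hA hB
    have h1 : ∀ y : Y, B.indicator (fun _ => 1 - accept y Set.univ) y
        = B.indicator (fun y => 1 - accept y Set.univ) y := by
      intro y; by_cases hy : y ∈ B <;> simp [hy]
    simp only [h1]
    rw [← lintegral_indicator hA, Set.indicator_indicator]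
  rw [key A B hA hB, hdiag A B hA hB, hdiag B A hB hA, Set.inter_comm]
end
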